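/- arXiv:1708.00721 — 7 statements merged into one kernel-verified Lean document; each statement's English description precedes it below -/
import Mathlib

section
/- In the composition construction, φ_x^p = 1, φ_y^q = 1 and (φ_x φ_y)^r = 1; consequently there is a unique group homomorphism φ : Δ(p,q,r) → Sym(𝒰) with φ(x) = φ_x and φ(y) = φ_y. -/
open Equiv

def triRels (p q r : ℕ) : Set (FreeGroup (Fin 2)) :=
  {FreeGroup.of 0 ^ p, FreeGroup.of 1 ^ q, (FreeGroup.of 0 * FreeGroup.of 1) ^ r}

/-- The triangle group `Δ(p,q,r) = ⟨x, y ∣ x^p = y^q = (xy)^r = 1⟩`. -/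
abbrev Tri (p q r : ℕ) := PresentedGroup (triRels p q r)

/-- The generator `x` of the triangle group. -/
def gx (p q r : ℕ) : Tri p q r := PresentedGroup.of 0

/-- The generator `y` of the triangle group. -/
def gy (p q r : ℕ) : Tri p q r := PresentedGroup.of 1

/-- `φ_x = π_1(x)⋯π_t(x) ∘ (a_1,…,a_p)(b_p,…,b_1)`. -/
def phiXgen (p q r t : ℕ) (𝒰 : Type) [DecidableEq 𝒰]
    (π : Fin t → (Tri p q r →* Equiv.Perm 𝒰)) (a b : Fin p → 𝒰) : Equiv.Perm 𝒰 :=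
  (List.ofFn fun i => π i (gx p q r)).prod * (List.ofFn a).formPerm *
    ((List.ofFn b).reverse).formPerm

/-- `φ_y = π_1(y)⋯π_t(y)`. -/
def phiYgen (p q r t : ℕ) (𝒰 : Type)
    (π : Fin t → (Tri p q r →* Equiv.Perm 𝒰)) : Equiv.Perm 𝒰 :=
  (List.ofFn fun i => π i (gy p q r)).prod

/-- Auxiliary: action of a product of permutations with disjoint supports. -/
private lemma prod_map_apply {𝒰 : Type} {t : ℕ} (Ω : Fin t → Set 𝒰)
    (σ : Fin t → Equiv.Perm 𝒰)
    (hfix : ∀ i z, z ∉ Ω i → σ i z = z)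
    (hstab : ∀ i z, z ∈ Ω i → σ i z ∈ Ω i)
    (hdisj : Pairwise fun i i' => Disjoint (Ω i) (Ω i'))
    (l : List (Fin t)) (hl : l.Nodup) (i₀ : Fin t) (z : 𝒰) (hz : z ∈ Ω i₀) :
    (l.map σ).prod z = if i₀ ∈ l then σ i₀ z else z := by
  induction l with
  | nil => simp
  | cons i l ih =>
    have hrest : (l.map σ).prod z = if i₀ ∈ l then σ i₀ z else z :=
      ih (List.Nodup.of_cons hl)
    simp only [List.map_cons, List.prod_cons, Equiv.Perm.mul_apply, hrest]
    by_cases hii : i = i₀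
    · subst hii
      have hnil : i ∉ l := (List.nodup_cons.mp hl).1
      simp [hnil, if_neg hnil]
    · have hout : ∀ w, w ∈ Ω i₀ → σ i w = w := fun w hw =>
        hfix i w (fun hmem => Set.disjoint_left.mp (hdisj hii) hmem hw)
      by_cases hmem : i₀ ∈ l
      · simp only [if_pos hmem, List.mem_cons, hmem, or_true, if_pos]
        exact hout _ (hstab i₀ z hz)
      · have : i₀ ∉ (i :: l) := by simp [hmem, Ne.symm hii]
        simp only [if_neg hmem, if_neg this]
        exact hout _ hz

private lemma perm_pow_fix {𝒰 : Type} (g : Equiv.Perm 𝒰) {x : 𝒰} (h : g x = x) (n : ℕ) :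
    (g ^ n) x = x :=
  Equiv.Perm.pow_apply_eq_self_of_apply_eq_self h n

theorem composition_relations_and_hom
    (p q r t k : ℕ) (hq : 0 < q) (hr : 0 < r) (ht : 0 < t) (htp : t ≤ p) (hk : 0 < k)
    (𝒰 : Type) [Fintype 𝒰] [DecidableEq 𝒰]
    (Ω : Fin t → Set 𝒰)
    (hdisj : Pairwise fun i i' => Disjoint (Ω i) (Ω i'))
    (hcover : (⋃ i, Ω i) = Set.univ)
    (π : Fin t → (Tri p q r →* Equiv.Perm 𝒰))
    (hfix : ∀ (i : Fin t) (g : Tri p q r) (z : 𝒰), z ∉ Ω i → π i g z = z)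
    (hstab : ∀ (i : Fin t) (g : Tri p q r) (z : 𝒰), z ∈ Ω i → π i g z ∈ Ω i)
    (htrans : ∀ i : Fin t, ∀ z ∈ Ω i, ∀ z' ∈ Ω i, ∃ g : Tri p q r, π i g z = z')
    (j : Fin p → Fin t) (hjsurj : Function.Surjective j)
    (a b : Fin p → 𝒰)
    (hmem : ∀ i, a i ∈ Ω (j i) ∧ b i ∈ Ω (j i))
    (hax : ∀ i, π (j i) (gx p q r) (a i) = a i)
    (hbx : ∀ i, π (j i) (gx p q r) (b i) = b i)
    (hhandle : ∀ i, ((π (j i) (gx p q r * gy p q r)) ^ k) (a i) = b i)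
    (hdistinct : Function.Injective (Sum.elim a b))
    (horb_a : ∀ (i i' : Fin p) (n : ℤ),
      ((π (j i) (gx p q r * gy p q r)) ^ n) (a i) = a i' → i' = i)
    (horb_b : ∀ (i i' : Fin p) (n : ℤ),
      ((π (j i) (gx p q r * gy p q r)) ^ n) (a i) = b i' → i' = i)
    (hks : ∀ i, k <
      Nat.card {w : 𝒰 | ∃ n : ℤ, ((π (j i) (gx p q r * gy p q r)) ^ n) (a i) = w}) :
    (phiXgen p q r t 𝒰 π a b) ^ p = 1 ∧
    (phiYgen p q r t 𝒰 π) ^ q = 1 ∧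
    (phiXgen p q r t 𝒰 π a b * phiYgen p q r t 𝒰 π) ^ r = 1 ∧
    ∃! φ : Tri p q r →* Equiv.Perm 𝒰,
      φ (gx p q r) = phiXgen p q r t 𝒰 π a b ∧
      φ (gy p q r) = phiYgen p q r t 𝒰 π := by
  have hp : 0 < p := lt_of_lt_of_le ht htp
  haveI : NeZero p := ⟨hp.ne'⟩
  -- relations in the triangle group
  have hrel : ∀ w ∈ triRels p q r, (PresentedGroup.mk (triRels p q r)) w = 1 := by
    intro w hw
    exact (QuotientGroup.eq_one_iff w).mpr (Subgroup.subset_normalClosure hw)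
  have hx1 : (gx p q r) ^ p = 1 := by
    have : (gx p q r) ^ p = (PresentedGroup.mk (triRels p q r)) (FreeGroup.of 0 ^ p) := by
      rw [map_pow]; rfl
    rw [this]
    exact hrel _ (by left; rfl)
  have hy1 : (gy p q r) ^ q = 1 := by
    have : (gy p q r) ^ q = (PresentedGroup.mk (triRels p q r)) (FreeGroup.of 1 ^ q) := by
      rw [map_pow]; rfl
    rw [this]
    exact hrel _ (by right; left; rfl)
  have hxy1 : (gx p q r * gy p q r) ^ r = 1 := by
    have : (gx p q r * gy p q r) ^ r =
        (PresentedGroup.mk (triRels p q r)) ((FreeGroup.of 0 * FreeGroup.of 1) ^ r) := by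
      rw [map_pow, map_mul]; rfl
    rw [this]
    exact hrel _ (by right; right; rfl)
  -- injectivity facts
  have hainj : Function.Injective a := by
    intro i i' h
    have := hdistinct (a₁ := Sum.inl i) (a₂ := Sum.inl i') (by simpa using h)
    simpa using this
  have hbinj : Function.Injective b := by
    intro i i' h
    have := hdistinct (a₁ := Sum.inr i) (a₂ := Sum.inr i') (by simpa using h)
    simpa using this
  have hab : ∀ i i', a i ≠ b i' := by
    intro i i' h
    have := hdistinct (a₁ := Sum.inl i) (a₂ := Sum.inr i') (by simpa using h)
    simp at this
  -- membership facts
  have hΩeq : ∀ {i i' : Fin t} {w : 𝒰}, w ∈ Ω i → w ∈ Ω i' → i = i' := by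
    intro i i' w h1 h2
    by_contra hne
    exact Set.disjoint_left.mp (hdisj hne) h1 h2
  have hcov : ∀ z : 𝒰, ∃ i, z ∈ Ω i := by
    intro z
    have : z ∈ ⋃ i, Ω i := hcover.symm ▸ Set.mem_univ z
    exact Set.mem_iUnion.mp this
  -- the product lemma
  have hL : ∀ (g : Tri p q r) (i₀ : Fin t) (z : 𝒰), z ∈ Ω i₀ →
      (List.ofFn fun i => π i g).prod z = π i₀ g z := by
    intro g i₀ z hz
    rw [List.ofFn_eq_map]
    have := prod_map_apply Ω (fun i => π i g) (fun i z hz => hfix i g z hz)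
      (fun i z hz => hstab i g z hz) hdisj (List.finRange t) (List.nodup_finRange t) i₀ z hz
    simpa [List.mem_finRange] using this
  -- the product homomorphism
  have hΦmul : ∀ g h : Tri p q r,
      (fun g : Tri p q r => (List.ofFn fun i => π i g).prod) (g * h) =
      (fun g : Tri p q r => (List.ofFn fun i => π i g).prod) g *
      (fun g : Tri p q r => (List.ofFn fun i => π i g).prod) h := by
    intro g h
    ext z
    obtain ⟨i₀, hz⟩ := hcov z
    simp only [Equiv.Perm.mul_apply]
    rw [hL h i₀ z hz, hL g i₀ _ (hstab i₀ h z hz), hL (g * h) i₀ z hz,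
      map_mul, Equiv.Perm.mul_apply]
  let Φ : Tri p q r →* Equiv.Perm 𝒰 :=
    MonoidHom.mk' (fun g => (List.ofFn fun i => π i g).prod) hΦmul
  have hΦ : ∀ g, Φ g = (List.ofFn fun i => π i g).prod := fun g => rfl
  have hΦapp : ∀ (g : Tri p q r) (i₀ : Fin t) (z : 𝒰), z ∈ Ω i₀ → Φ g z = π i₀ g z :=
    fun g i₀ z hz => hL g i₀ z hz
  -- formPerm facts
  set A : Equiv.Perm 𝒰 := (List.ofFn a).formPerm with hAdef
  set Ab : Equiv.Perm 𝒰 := (List.ofFn b).formPerm with hAbdef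
  set Bb : Equiv.Perm 𝒰 := ((List.ofFn b).reverse).formPerm with hBbdef
  have hndA : (List.ofFn a).Nodup := List.nodup_ofFn.mpr hainj
  have hndB : (List.ofFn b).Nodup := List.nodup_ofFn.mpr hbinj
  have hBinv : Bb = Ab⁻¹ := List.formPerm_reverse _
  have hfinadd : ∀ (c : Fin p → 𝒰) (i : Fin p), c ⟨((i : ℕ) + 1) % p, Nat.mod_lt _ hp⟩ = c (i + 1) := by
    intro c i
    congr 1
    ext
    simp [Fin.add_def, Fin.val_one' p, Nat.add_mod, Nat.mod_eq_of_lt i.isLt]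
  have hcycle : ∀ (c : Fin p → 𝒰) (hc : Function.Injective c) (i : Fin p),
      (List.ofFn c).formPerm (c i) = c (i + 1) := by
    intro c hc i
    have h1 : ((i : ℕ)) < (List.ofFn c).length := by simp [i.isLt]
    have := List.formPerm_apply_getElem (List.ofFn c) (List.nodup_ofFn.mpr hc) i h1
    simp only [List.getElem_ofFn, List.length_ofFn] at this
    rw [hfinadd c i] at this
    simpa using this
  have hA : ∀ i : Fin p, A (a i) = a (i + 1) := fun i => hcycle a hainj i
  have hAb : ∀ i : Fin p, Ab (b i) = b (i + 1) := fun i => hcycle b hbinj i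
  have hB : ∀ i : Fin p, Bb (b (i + 1)) = b i := by
    intro i
    rw [hBinv]
    exact (Equiv.Perm.inv_eq_iff_eq).mpr (hAb i).symm
  have hBgen : ∀ i : Fin p, Bb (b i) = b (i - 1) := by
    intro i
    have := hB (i - 1)
    rwa [sub_add_cancel] at this
  have hAfix : ∀ w, (∀ i', w ≠ a i') → A w = w := by
    intro w hw
    exact List.formPerm_apply_of_notMem (by
      rw [List.mem_ofFn]
      rintro ⟨i', rfl⟩
      exact hw i' rfl)
  have hAbfix : ∀ w, (∀ i', w ≠ b i') → Ab w = w := by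
    intro w hw
    exact List.formPerm_apply_of_notMem (by
      rw [List.mem_ofFn]
      rintro ⟨i', rfl⟩
      exact hw i' rfl)
  have hBfix : ∀ w, (∀ i', w ≠ b i') → Bb w = w := by
    intro w hw
    rw [hBinv]
    exact (Equiv.Perm.inv_eq_iff_eq).mpr (hAbfix w hw).symm
  have hpowcycle : ∀ (c : Fin p → 𝒰) (hc : Function.Injective c),
      (List.ofFn c).formPerm ^ p = 1 := by
    intro c hc
    ext w
    by_cases hw : w ∈ Set.range c
    · obtain ⟨i, rfl⟩ := hw
      have h1 : ((i : ℕ)) < (List.ofFn c).length := by simp [i.isLt]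
      have := List.formPerm_pow_apply_getElem (List.ofFn c) (List.nodup_ofFn.mpr hc) p i h1
      simp only [List.getElem_ofFn, List.length_ofFn] at this
      have h2 : ((i : ℕ) + p) % p = (i : ℕ) := by
        rw [Nat.add_mod_right]
        exact Nat.mod_eq_of_lt i.isLt
      simp only [Equiv.Perm.one_apply]
      rw [Fin.eta] at this
      rw [this]
      congr 1
      exact Fin.ext (by simp [h2])
    · have hfixw : (List.ofFn c).formPerm w = w := List.formPerm_apply_of_notMem (by
        rw [List.mem_ofFn]; exact hw)
      simp [perm_pow_fix _ hfixw p]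
  have hApow : A ^ p = 1 := hpowcycle a hainj
  have hBpow : Bb ^ p = 1 := by
    rw [hBinv, inv_pow, hpowcycle b hbinj, inv_one]
  -- fixed points of Φ (gx)
  have hXa : ∀ i, Φ (gx p q r) (a i) = a i := fun i => by
    rw [hΦapp _ (j i) _ (hmem i).1]; exact hax i
  have hXb : ∀ i, Φ (gx p q r) (b i) = b i := fun i => by
    rw [hΦapp _ (j i) _ (hmem i).2]; exact hbx i
  -- commutation lemmas
  have hfixr : ∀ (σ : Perm 𝒰) (c : Fin p → 𝒰), (∀ i, σ (c i) = c i) →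
      ∀ (w : 𝒰) (i : Fin p), σ w = c i → w = c i := by
    intro σ c hc w i h
    exact σ.injective (h.trans (hc i).symm)
  have hcommXA : Commute (Φ (gx p q r)) A := by
    apply Equiv.ext
    intro z
    simp only [Equiv.Perm.mul_apply]
    by_cases hz : ∃ i, z = a i
    · obtain ⟨i, rfl⟩ := hz
      rw [hA, hXa, hXa, hA]
    · push_neg at hz
      rw [hAfix z hz, hAfix _ (fun i h => hz i (hfixr _ a hXa z i h))]
  have hcommXB : Commute (Φ (gx p q r)) Bb := by
    apply Equiv.ext
    intro z
    simp only [Equiv.Perm.mul_apply]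
    by_cases hz : ∃ i, z = b i
    · obtain ⟨i, rfl⟩ := hz
      rw [hBgen, hXb, hXb, hBgen]
    · push_neg at hz
      rw [hBfix z hz, hBfix _ (fun i h => hz i (hfixr _ b hXb z i h))]
  have hcommAB : Commute A Bb := by
    apply Equiv.ext
    intro z
    simp only [Equiv.Perm.mul_apply]
    by_cases hza : ∃ i, z = a i
    · obtain ⟨i, rfl⟩ := hza
      rw [hBfix _ (fun i' => hab i i'), hA, hBfix _ (fun i' => hab (i+1) i')]
    · push_neg at hza
      by_cases hzb : ∃ i, z = b i
      · obtain ⟨i, rfl⟩ := hzb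
        rw [hBgen, hAfix _ (fun i' h => (hab i' (i-1) h.symm).elim),
          hAfix _ (fun i' h => (hab i' i h.symm).elim), hBgen]
      · push_neg at hzb
        rw [hBfix z hzb, hAfix z hza, hBfix z hzb]
  -- part 1
  have hXp : Φ (gx p q r) ^ p = 1 := by rw [← map_pow, hx1, map_one]
  have hphiX : phiXgen p q r t 𝒰 π a b = Φ (gx p q r) * A * Bb := rfl
  have hphiY : phiYgen p q r t 𝒰 π = Φ (gy p q r) := rfl
  have part1 : (phiXgen p q r t 𝒰 π a b) ^ p = 1 := by
    rw [hphiX, (hcommXB.mul_left hcommAB).mul_pow, hcommXA.mul_pow, hXp, hApow, hBpow]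
    simp
  have part2 : (phiYgen p q r t 𝒰 π) ^ q = 1 := by
    rw [hphiY, ← map_pow, hy1, map_one]
  -- part 3
  set C : Perm 𝒰 := A * Bb with hCdef
  have hCX : Commute C (Φ (gx p q r)) := hcommXA.symm.mul_left hcommXB.symm
  set M : Perm 𝒰 := C * Φ (gx p q r * gy p q r) with hMdef
  have hMeq : phiXgen p q r t 𝒰 π a b * phiYgen p q r t 𝒰 π = M := by
    rw [hphiX, hphiY, hMdef, hCdef, map_mul]
    rw [mul_assoc (Φ (gx p q r)) A Bb, ← hCX.eq, hCdef, mul_assoc, mul_assoc]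
  -- cycle data
  set f : Fin p → Perm 𝒰 := fun i => π (j i) (gx p q r * gy p q r) with hfdef
  have hhandle2 : ∀ i, ((f i) ^ k) (a i) = b i := hhandle
  have horb_a2 : ∀ (i i' : Fin p) (n : ℤ), ((f i) ^ n) (a i) = a i' → i' = i := horb_a
  have horb_b2 : ∀ (i i' : Fin p) (n : ℤ), ((f i) ^ n) (a i) = b i' → i' = i := horb_b
  have hks2 : ∀ i, k < Nat.card {w : 𝒰 | ∃ n : ℤ, ((f i) ^ n) (a i) = w} := hks
  set s : Fin p → ℕ := fun i => Function.minimalPeriod (⇑(f i)) (a i) with hsdef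
  have hfr : ∀ i, (f i) ^ r = 1 := fun i => by
    rw [hfdef]
    show π (j i) (gx p q r * gy p q r) ^ r = 1
    rw [← map_pow, hxy1, map_one]
  have hper : ∀ i, Function.IsPeriodicPt (⇑(f i)) r (a i) := by
    intro i
    show (⇑(f i))^[r] (a i) = a i
    rw [Equiv.Perm.iterate_eq_pow, hfr i]
    rfl
  have hspos : ∀ i, 0 < s i := fun i => (hper i).minimalPeriod_pos hr
  have hsdvd : ∀ i, s i ∣ r := fun i => (hper i).minimalPeriod_dvd
  have hfs : ∀ i, ((f i) ^ (s i)) (a i) = a i := by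
    intro i
    have := Function.isPeriodicPt_minimalPeriod (⇑(f i)) (a i)
    rwa [Function.IsPeriodicPt, Function.IsFixedPt, Equiv.Perm.iterate_eq_pow] at this
  have hperiod : ∀ (i : Fin p) (m : ℕ), ((f i) ^ m) (a i) = a i → s i ∣ m := by
    intro i m h
    apply Function.IsPeriodicPt.minimalPeriod_dvd
    show (⇑(f i))^[m] (a i) = a i
    rwa [Equiv.Perm.iterate_eq_pow]
  -- integer power reduction
  have hzred : ∀ (i : Fin p) (n : ℤ), ((f i) ^ n) (a i) = ((f i) ^ ((n % (s i : ℤ)).toNat)) (a i) := by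
    intro i n
    have hs0 : (0 : ℤ) < (s i : ℤ) := by exact_mod_cast hspos i
    have hfsz : ((f i) ^ ((s i : ℕ) : ℤ)) (a i) = a i := by rw [zpow_natCast]; exact hfs i
    have key : ∀ m : ℤ, ((f i) ^ (((s i : ℕ) : ℤ) * m)) (a i) = a i := by
      intro m
      rw [zpow_mul]
      exact Equiv.Perm.zpow_apply_eq_self_of_apply_eq_self hfsz m
    have hnn : (0 : ℤ) ≤ n % (s i : ℤ) := Int.emod_nonneg n hs0.ne'
    calc ((f i) ^ n) (a i)
        = ((f i) ^ (n % (s i : ℤ) + (s i : ℤ) * (n / (s i : ℤ)))) (a i) := by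
          rw [Int.emod_add_mul_ediv n (s i : ℤ)]
      _ = ((f i) ^ (n % (s i : ℤ))) (((f i) ^ ((s i : ℤ) * (n / (s i : ℤ)))) (a i)) := by
          rw [zpow_add, Equiv.Perm.mul_apply]
      _ = ((f i) ^ (n % (s i : ℤ))) (a i) := by rw [key]
      _ = ((f i) ^ ((n % (s i : ℤ)).toNat)) (a i) := by
          rw [← zpow_natCast, Int.toNat_of_nonneg hnn]
  -- k < s i
  have hks' : ∀ i, k < s i := by
    intro i
    refine lt_of_lt_of_le (hks2 i) ?_
    have hsub : {w : 𝒰 | ∃ n : ℤ, ((f i) ^ n) (a i) = w} ⊆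
        Set.range (fun m : Fin (s i) => ((f i) ^ (m : ℕ)) (a i)) := by
      rintro w ⟨n, rfl⟩
      have hs0 : (0 : ℤ) < (s i : ℤ) := by exact_mod_cast hspos i
      have h1 : n % (s i : ℤ) < (s i : ℤ) := Int.emod_lt_of_pos n hs0
      have h2 : (0 : ℤ) ≤ n % (s i : ℤ) := Int.emod_nonneg n hs0.ne'
      refine ⟨⟨(n % (s i : ℤ)).toNat, ?_⟩, ?_⟩
      · omega
      · exact (hzred i n).symm
    calc Nat.card {w : 𝒰 | ∃ n : ℤ, ((f i) ^ n) (a i) = w}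
        ≤ Nat.card (Set.range (fun m : Fin (s i) => ((f i) ^ (m : ℕ)) (a i))) :=
          Nat.card_mono (Set.toFinite _) hsub
      _ ≤ Nat.card (Fin (s i)) := Finite.card_range_le _
      _ = s i := by simp
  -- unmarked points of the orbit
  have hU : ∀ (i : Fin p) (m : ℕ), 0 < m → m < s i → m ≠ k →
      (∀ i', ((f i) ^ m) (a i) ≠ a i') ∧ (∀ i', ((f i) ^ m) (a i) ≠ b i') := by
    intro i m hm0 hms hmk
    constructor
    · intro i' h
      have hii : i' = i := horb_a2 i i' (m : ℤ) (by rw [zpow_natCast]; exact h)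
      rw [hii] at h
      have hdvd := hperiod i m h
      exact absurd (Nat.le_of_dvd hm0 hdvd) (not_le.mpr hms)
    · intro i' h
      have hii : i' = i := horb_b2 i i' (m : ℤ) (by rw [zpow_natCast]; exact h)
      rw [hii] at h
      rw [← hhandle2 i] at h
      rcases lt_trichotomy m k with hlt | heq | hgt
      · have h1 : ((f i) ^ (k - m)) (a i) = a i := by
          apply (Equiv.injective ((f i) ^ m))
          rw [← Equiv.Perm.mul_apply, ← pow_add, Nat.add_sub_cancel' hlt.le, h]
        have hdvd := hperiod i (k - m) h1
        have := Nat.le_of_dvd (by omega) hdvd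
        have hkp : k < s i := hks' i
        omega
      · exact hmk heq
      · have h1 : ((f i) ^ (m - k)) (a i) = a i := by
          apply (Equiv.injective ((f i) ^ k))
          rw [← Equiv.Perm.mul_apply, ← pow_add, Nat.add_sub_cancel' hgt.le, ← h]
        have hdvd := hperiod i (m - k) h1
        have := Nat.le_of_dvd (by omega) hdvd
        omega
  -- action of C on marked points
  have hCa : ∀ i, C (a i) = a (i + 1) := by
    intro i
    show A (Bb (a i)) = a (i + 1)
    rw [hBfix _ (fun i' => hab i i'), hA]
  have hCb : ∀ i, C (b i) = b (i - 1) := by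
    intro i
    show A (Bb (b i)) = b (i - 1)
    rw [hBgen, hAfix _ (fun i' h => (hab i' (i - 1) h.symm).elim)]
  have hCfix : ∀ w, (∀ i', w ≠ a i') → (∀ i', w ≠ b i') → C w = w := by
    intro w h1 h2
    show A (Bb w) = w
    rw [hBfix w h2, hAfix w h1]
  -- M step
  have hMstep : ∀ (w : 𝒰) (i₀ : Fin t), w ∈ Ω i₀ →
      M w = C (π i₀ (gx p q r * gy p q r) w) := by
    intro w i₀ hw
    rw [hMdef, Equiv.Perm.mul_apply, hΦapp _ i₀ _ hw]
  have hmemf : ∀ (i : Fin p) (m : ℕ), ((f i) ^ m) (a i) ∈ Ω (j i) := by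
    intro i m
    have h1 : (f i) ^ m = π (j i) ((gx p q r * gy p q r) ^ m) := by
      rw [hfdef]; exact (map_pow _ _ _).symm
    rw [h1]
    exact hstab _ _ _ (hmem i).1
  have hstepf : ∀ (i : Fin p) (m : ℕ),
      π (j i) (gx p q r * gy p q r) (((f i) ^ m) (a i)) = ((f i) ^ (m + 1)) (a i) := by
    intro i m
    rw [pow_succ' (f i) m, Equiv.Perm.mul_apply]
  -- trajectory through a i
  have hT1 : ∀ (i : Fin p) (m : ℕ), m ≤ k →
      (M ^ m) (a i) = if m = k then b (i - 1) else ((f i) ^ m) (a i) := by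
    intro i m
    induction m with
    | zero =>
      intro _
      rw [if_neg (by omega)]
      simp
    | succ m ih =>
      intro hm1
      have ihm := ih (by omega)
      rw [if_neg (by omega : m ≠ k)] at ihm
      rw [pow_succ' M m, Equiv.Perm.mul_apply, ihm, hMstep _ (j i) (hmemf i m), hstepf i m]
      by_cases hmk1 : m + 1 = k
      · rw [if_pos hmk1, hmk1, hhandle2 i, hCb i]
      · rw [if_neg hmk1]
        have hlt : m + 1 < s i := lt_of_lt_of_le (by omega) (hks' i).le
        exact hCfix _ (hU i (m+1) (Nat.succ_pos m) hlt hmk1).1 (hU i (m+1) (Nat.succ_pos m) hlt hmk1).2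
  -- trajectory through b i
  have hT2 : ∀ (i : Fin p) (m : ℕ), m ≤ s i - k →
      (M ^ m) (b i) = if m = s i - k then a (i + 1) else ((f i) ^ (k + m)) (a i) := by
    intro i m
    induction m with
    | zero =>
      intro _
      have hkp : k < s i := hks' i
      rw [if_neg (by omega)]
      simp only [pow_zero, Equiv.Perm.one_apply, Nat.add_zero]
      exact (hhandle2 i).symm
    | succ m ih =>
      intro hm1
      have hkp : k < s i := hks' i
      have ihm := ih (by omega)
      rw [if_neg (by omega : m ≠ s i - k)] at ihm
      rw [pow_succ' M m, Equiv.Perm.mul_apply, ihm, hMstep _ (j i) (hmemf i (k + m)),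
        hstepf i (k + m)]
      by_cases hend : m + 1 = s i - k
      · rw [if_pos hend, show k + m + 1 = s i by omega, hfs i, hCa i]
      · rw [if_neg hend]
        have h0 : 0 < k + m + 1 := by omega
        have h1 : k + m + 1 < s i := by omega
        have h2 : k + m + 1 ≠ k := by omega
        exact hCfix _ (hU i (k+m+1) h0 h1 h2).1 (hU i (k+m+1) h0 h1 h2).2
  -- closing up the cycles
  have hMb : ∀ i, (M ^ k) (a (i + 1)) = b i := by
    intro i
    have h1 := hT1 (i + 1) k le_rfl
    rw [if_pos rfl, add_sub_cancel_right] at h1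
    exact h1
  have hMcycle : ∀ i, (M ^ (s i)) (a (i + 1)) = a (i + 1) := by
    intro i
    have hkp : k < s i := hks' i
    have h2 := hT2 i (s i - k) le_rfl
    rw [if_pos rfl] at h2
    have hsplit : (M ^ (s i - k)) ((M ^ k) (a (i + 1))) = (M ^ (s i)) (a (i + 1)) := by
      rw [← Equiv.Perm.mul_apply, ← pow_add, Nat.sub_add_cancel hkp.le]
    rw [← hsplit, hMb i, h2]
  have hMr' : ∀ i, (M ^ r) (a i) = a i := by
    intro i
    obtain ⟨c, hc⟩ := hsdvd (i - 1)
    have := hMcycle (i - 1)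
    rw [sub_add_cancel] at this
    rw [hc, pow_mul]
    exact perm_pow_fix (M ^ s (i - 1)) this c
  have hcommM : ∀ (u v : ℕ) (w : 𝒰), (M ^ u) ((M ^ v) w) = (M ^ v) ((M ^ u) w) := by
    intro u v w
    rw [← Equiv.Perm.mul_apply, ← Equiv.Perm.mul_apply, ← pow_add, ← pow_add, Nat.add_comm]
  -- the full fixed-point statement
  have hMfull : ∀ z, (M ^ r) z = z := by
    intro z
    by_cases hcase : ∃ (i : Fin p) (n : ℤ), ((f i) ^ n) (a i) = z
    · obtain ⟨i, n, hn⟩ := hcase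
      have hs0 : (0 : ℤ) < (s i : ℤ) := by exact_mod_cast hspos i
      have hm1 : n % (s i : ℤ) < (s i : ℤ) := Int.emod_lt_of_pos n hs0
      have hm2 : (0 : ℤ) ≤ n % (s i : ℤ) := Int.emod_nonneg n hs0.ne'
      set m : ℕ := (n % (s i : ℤ)).toNat with hm
      have hmlt : m < s i := by omega
      have hz : ((f i) ^ m) (a i) = z := (hzred i n).symm.trans hn
      by_cases hmk : m < k
      · have h1 := hT1 i m hmk.le
        rw [if_neg hmk.ne] at h1
        calc (M ^ r) z = (M ^ r) ((M ^ m) (a i)) := by rw [h1, hz]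
          _ = (M ^ m) ((M ^ r) (a i)) := hcommM r m _
          _ = (M ^ m) (a i) := by rw [hMr' i]
          _ = z := by rw [h1, hz]
      · push_neg at hmk
        have hkp : k < s i := hks' i
        have h2 := hT2 i (m - k) (by omega)
        rw [if_neg (by omega), show k + (m - k) = m by omega] at h2
        calc (M ^ r) z = (M ^ r) ((M ^ (m - k)) ((M ^ k) (a (i + 1)))) := by
              rw [hMb i, h2, hz]
          _ = (M ^ (m - k)) ((M ^ r) ((M ^ k) (a (i + 1)))) := hcommM r (m - k) _
          _ = (M ^ (m - k)) ((M ^ k) ((M ^ r) (a (i + 1)))) := by rw [hcommM r k]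
          _ = (M ^ (m - k)) ((M ^ k) (a (i + 1))) := by rw [hMr' (i + 1)]
          _ = z := by rw [hMb i, h2, hz]
    · obtain ⟨i₀, hz⟩ := hcov z
      set g : Perm 𝒰 := π i₀ (gx p q r * gy p q r) with hgdef
      have hgm : ∀ m : ℕ, (g ^ m) z ∈ Ω i₀ := by
        intro m
        have : g ^ m = π i₀ ((gx p q r * gy p q r) ^ m) := by
          rw [hgdef]; exact (map_pow _ _ _).symm
        rw [this]
        exact hstab _ _ _ hz
      have hcancel : ∀ (u : ℤ) (w : 𝒰), (g ^ (-u)) ((g ^ u) w) = w := by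
        intro u w
        rw [← Equiv.Perm.mul_apply, ← zpow_add, neg_add_cancel, zpow_zero, Equiv.Perm.one_apply]
      have hunmarked : ∀ (m : ℕ) (i' : Fin p), (g ^ m) z ≠ a i' ∧ (g ^ m) z ≠ b i' := by
        intro m i'
        constructor
        · intro h
          have hj : j i' = i₀ := hΩeq (hmem i').1 (h ▸ hgm m)
          apply hcase
          refine ⟨i', -(m : ℤ), ?_⟩
          have hfg : f i' = g := by simp only [hfdef, hgdef]; rw [hj]
          rw [hfg]
          calc (g ^ (-(m : ℤ))) (a i') = (g ^ (-(m : ℤ))) ((g ^ ((m : ℕ) : ℤ)) z) := by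
                rw [zpow_natCast, h]
            _ = z := hcancel _ _
        · intro h
          have hj : j i' = i₀ := hΩeq (hmem i').2 (h ▸ hgm m)
          apply hcase
          refine ⟨i', (k : ℤ) - (m : ℤ), ?_⟩
          have hfg : f i' = g := by simp only [hfdef, hgdef]; rw [hj]
          rw [hfg]
          have hbk : (g ^ k) (a i') = b i' := by rw [← hfg]; exact hhandle2 i'
          calc (g ^ ((k : ℤ) - (m : ℤ))) (a i')
              = (g ^ (-(m : ℤ))) ((g ^ ((k : ℕ) : ℤ)) (a i')) := by
                rw [← Equiv.Perm.mul_apply, ← zpow_add, sub_eq_neg_add]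
            _ = (g ^ (-(m : ℤ))) ((g ^ ((m : ℕ) : ℤ)) z) := by
                rw [zpow_natCast, zpow_natCast, hbk, h]
            _ = z := hcancel _ _
      have hMiter : ∀ m : ℕ, (M ^ m) z = (g ^ m) z := by
        intro m
        induction m with
        | zero => simp
        | succ m ih =>
          rw [pow_succ' M m, Equiv.Perm.mul_apply, ih, hMstep _ i₀ (hgm m)]
          have hstep : π i₀ (gx p q r * gy p q r) ((g ^ m) z) = (g ^ (m + 1)) z := by
            rw [pow_succ' g m, Equiv.Perm.mul_apply]
          rw [hstep]
          exact hCfix _ (fun i' => (hunmarked (m+1) i').1) (fun i' => (hunmarked (m+1) i').2)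
      rw [hMiter r]
      have : g ^ r = 1 := by rw [hgdef, ← map_pow, hxy1, map_one]
      rw [this]
      rfl
  have part3 : (phiXgen p q r t 𝒰 π a b * phiYgen p q r t 𝒰 π) ^ r = 1 := by
    rw [hMeq]
    ext w
    simp [hMfull w]
  refine ⟨part1, part2, part3, ?_⟩
  -- the unique homomorphism
  set F : Fin 2 → Perm 𝒰 :=
    fun x => if x = 0 then phiXgen p q r t 𝒰 π a b else phiYgen p q r t 𝒰 π with hFdef
  have hF0 : F 0 = phiXgen p q r t 𝒰 π a b := by simp [hFdef]
  have hF1 : F 1 = phiYgen p q r t 𝒰 π := by simp [hFdef]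
  have hrels : ∀ w ∈ triRels p q r, FreeGroup.lift F w = 1 := by
    intro w hw
    simp only [triRels, Set.mem_insert_iff, Set.mem_singleton_iff] at hw
    rcases hw with rfl | rfl | rfl
    · rw [map_pow, FreeGroup.lift_apply_of, hF0]
      exact part1
    · rw [map_pow, FreeGroup.lift_apply_of, hF1]
      exact part2
    · rw [map_pow, map_mul, FreeGroup.lift_apply_of, FreeGroup.lift_apply_of, hF0, hF1]
      exact part3
  refine ⟨PresentedGroup.toGroup hrels, ⟨?_, ?_⟩, ?_⟩
  · exact (PresentedGroup.toGroup.of hrels).trans hF0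
  · exact (PresentedGroup.toGroup.of hrels).trans hF1
  · rintro ψ ⟨h1, h2⟩
    apply PresentedGroup.ext
    intro x
    rw [PresentedGroup.toGroup.of]
    fin_cases x
    · show ψ (gx p q r) = F 0
      rw [hF0]; exact h1
    · show ψ (gy p q r) = F 1
      rw [hF1]; exact h2
end

section
/- In the composition construction, the subgroup ⟨φ_x, φ_y⟩ of Sym(𝒰) acts transitively on 𝒰; equivalently, the permutation representation φ of Δ(p,q,r) on 𝒰 determined by φ(x) = φ_x and φ(y) = φ_y is transitive. -/
open Equiv

theorem composition_transitive
    (p q r t k : ℕ) (hq : 0 < q) (hr : 0 < r) (ht : 0 < t) (htp : t ≤ p) (hk : 0 < k)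
    (𝒰 : Type) [Fintype 𝒰] [DecidableEq 𝒰]
    (Ω : Fin t → Set 𝒰)
    (hdisj : Pairwise fun i i' => Disjoint (Ω i) (Ω i'))
    (hcover : (⋃ i, Ω i) = Set.univ)
    (π : Fin t → (Tri p q r →* Equiv.Perm 𝒰))
    (hfix : ∀ (i : Fin t) (g : Tri p q r) (z : 𝒰), z ∉ Ω i → π i g z = z)
    (hstab : ∀ (i : Fin t) (g : Tri p q r) (z : 𝒰), z ∈ Ω i → π i g z ∈ Ω i)
    (htrans : ∀ i : Fin t, ∀ z ∈ Ω i, ∀ z' ∈ Ω i, ∃ g : Tri p q r, π i g z = z')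
    (j : Fin p → Fin t) (hjsurj : Function.Surjective j)
    (a b : Fin p → 𝒰)
    (hmem : ∀ i, a i ∈ Ω (j i) ∧ b i ∈ Ω (j i))
    (hax : ∀ i, π (j i) (gx p q r) (a i) = a i)
    (hbx : ∀ i, π (j i) (gx p q r) (b i) = b i)
    (hhandle : ∀ i, ((π (j i) (gx p q r * gy p q r)) ^ k) (a i) = b i)
    (hdistinct : Function.Injective (Sum.elim a b))
    (horb_a : ∀ (i i' : Fin p) (n : ℤ),
      ((π (j i) (gx p q r * gy p q r)) ^ n) (a i) = a i' → i' = i)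
    (horb_b : ∀ (i i' : Fin p) (n : ℤ),
      ((π (j i) (gx p q r * gy p q r)) ^ n) (a i) = b i' → i' = i)
    (hks : ∀ i, k <
      Nat.card {w : 𝒰 | ∃ n : ℤ, ((π (j i) (gx p q r * gy p q r)) ^ n) (a i) = w}) :
    ∀ z z' : 𝒰, ∃ h ∈ Subgroup.closure {phiXgen p q r t 𝒰 π a b, phiYgen p q r t 𝒰 π},
      h z = z' := by
  classical
  intro z z'
  set φx := phiXgen p q r t 𝒰 π a b with hφx
  set φy := phiYgen p q r t 𝒰 π with hφy
  set H := Subgroup.closure {φx, φy} with hH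
  -- the reachability relation
  set R : 𝒰 → 𝒰 → Prop := fun u v => ∃ h ∈ H, h u = v with hR
  have hRrefl : ∀ u, R u u := fun u => ⟨1, one_mem H, rfl⟩
  have hRsymm : ∀ u v, R u v → R v u := by
    rintro u v ⟨h, hh, rfl⟩
    exact ⟨h⁻¹, inv_mem hh, Equiv.symm_apply_apply h u⟩
  have hRtrans : ∀ u v w, R u v → R v w → R u w := by
    rintro u v w ⟨h1, hh1, rfl⟩ ⟨h2, hh2, rfl⟩
    exact ⟨h2 * h1, mul_mem hh2 hh1, rfl⟩
  have hRX : ∀ u, R u (φx u) := fun u =>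
    ⟨φx, Subgroup.subset_closure (Set.mem_insert _ _), rfl⟩
  have hRY : ∀ u, R u (φy u) := fun u =>
    ⟨φy, Subgroup.subset_closure (Set.mem_insert_of_mem _ rfl), rfl⟩
  have hainj : Function.Injective a := by
    intro m m' h
    have := hdistinct (a₁ := Sum.inl m) (a₂ := Sum.inl m') h
    simpa using this
  have hab : ∀ m n, a m ≠ b n := by
    intro m n h
    have := hdistinct (a₁ := Sum.inl m) (a₂ := Sum.inr n) h
    simpa using this
  have hnotin : ∀ i m, i ≠ j m → a m ∉ Ω i ∧ b m ∉ Ω i := by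
    intro i m h
    have hd := hdisj h
    exact ⟨Set.disjoint_right.mp hd (hmem m).1, Set.disjoint_right.mp hd (hmem m).2⟩
  -- products of commuting block permutations
  have haux : ∀ (g : Tri p q r) (i : Fin t) (u : 𝒰), u ∈ Ω i →
      ∀ l : List (Fin t), l.Nodup →
        ((l.map fun m => π m g).prod u = if i ∈ l then π i g u else u) := by
    intro g i u hu l
    induction l with
    | nil => simp
    | cons m l ih =>
      intro hnd
      have hm : m ∉ l := (List.nodup_cons.mp hnd).1
      have hl : l.Nodup := (List.nodup_cons.mp hnd).2
      simp only [List.map_cons, List.prod_cons, Equiv.Perm.mul_apply, ih hl]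
      by_cases hmi : m = i
      · subst hmi
        rw [if_neg hm, if_pos ((List.mem_cons_self : m ∈ m :: l))]
      · have hic : i ∈ m :: l ↔ i ∈ l := by
          rw [List.mem_cons]
          exact ⟨fun h => h.elim (fun h' => absurd h'.symm hmi) id, Or.inr⟩
        by_cases hil : i ∈ l
        · have h1 : π i g u ∈ Ω i := hstab i g u hu
          have h2 : π i g u ∉ Ω m := Set.disjoint_right.mp (hdisj hmi) h1
          rw [if_pos hil, hfix m g _ h2, if_pos (hic.mpr hil)]
        · have h2 : u ∉ Ω m := Set.disjoint_right.mp (hdisj hmi) hu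
          rw [if_neg hil, hfix m g _ h2, if_neg (fun h => hil (hic.mp h))]
  have hprodΩ : ∀ (g : Tri p q r) (i : Fin t) (u : 𝒰), u ∈ Ω i →
      (List.ofFn fun m => π m g).prod u = π i g u := by
    intro g i u hu
    rw [List.ofFn_eq_map, haux g i u hu _ (List.nodup_finRange t)]
    simp [List.mem_finRange]
  -- every point lies in some block
  have hsome : ∀ u : 𝒰, ∃ i, u ∈ Ω i := by
    intro u
    have : u ∈ ⋃ i, Ω i := by rw [hcover]; trivial
    exact Set.mem_iUnion.mp this
  -- π i (gx) fixes all handle points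
  have hfixa : ∀ (i : Fin t) (m : Fin p), π i (gx p q r) (a m) = a m := by
    intro i m
    by_cases h : i = j m
    · subst h; exact hax m
    · exact hfix i _ _ (hnotin i m h).1
  have hfixb : ∀ (i : Fin t) (m : Fin p), π i (gx p q r) (b m) = b m := by
    intro i m
    by_cases h : i = j m
    · subst h; exact hbx m
    · exact hfix i _ _ (hnotin i m h).2
  have hbfix : ∀ u : 𝒰, (¬ ∃ n, b n = u) → ((List.ofFn b).reverse).formPerm u = u := by
    intro u hu
    apply List.formPerm_apply_of_notMem
    simp only [List.mem_reverse, List.mem_ofFn]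
    exact fun ⟨n, hn⟩ => hu ⟨n, hn⟩
  have hp : 0 < p := lt_of_lt_of_le ht htp
  -- the action of φx on the a-points
  have hφxa : ∀ m : Fin p, φx (a m) = a ⟨(m.val + 1) % p, Nat.mod_lt _ hp⟩ := by
    intro m
    have hnd : (List.ofFn a).Nodup := List.nodup_ofFn.mpr hainj
    have h1 : ((List.ofFn b).reverse).formPerm (a m) = a m :=
      hbfix (a m) (fun ⟨n, hn⟩ => hab m n hn.symm)
    have hml : (m : ℕ) < (List.ofFn a).length := by simp [m.isLt]
    have h2 : (List.ofFn a).formPerm (a m) = a ⟨(m.val + 1) % p, Nat.mod_lt _ hp⟩ := by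
      have := List.formPerm_apply_getElem (List.ofFn a) hnd m.val hml
      simpa using this
    have h3 : (List.ofFn fun i => π i (gx p q r)).prod
        (a ⟨(m.val + 1) % p, Nat.mod_lt _ hp⟩) = a ⟨(m.val + 1) % p, Nat.mod_lt _ hp⟩ := by
      rw [hprodΩ _ (j ⟨(m.val + 1) % p, Nat.mod_lt _ hp⟩) _ (hmem _).1]
      exact hax _
    simp only [hφx, phiXgen, Equiv.Perm.mul_apply, h1, h2, h3]
  -- reachability edges of the two generators
  have hRstepx : ∀ (i : Fin t) (u : 𝒰), R u (π i (gx p q r) u) := by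
    intro i u
    by_cases hua : ∃ m, a m = u
    · obtain ⟨m, rfl⟩ := hua
      rw [hfixa i m]; exact hRrefl _
    · by_cases hub : ∃ m, b m = u
      · obtain ⟨m, rfl⟩ := hub
        rw [hfixb i m]; exact hRrefl _
      · by_cases hui : u ∈ Ω i
        · have key : φx u = π i (gx p q r) u := by
            have h1 : ((List.ofFn b).reverse).formPerm u = u := hbfix u hub
            have h2 : (List.ofFn a).formPerm u = u := by
              apply List.formPerm_apply_of_notMem
              simp only [List.mem_ofFn]
              exact fun ⟨n, hn⟩ => hua ⟨n, hn⟩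
            simp only [hφx, phiXgen, Equiv.Perm.mul_apply, h1, h2, hprodΩ _ i u hui]
          rw [← key]; exact hRX u
        · rw [hfix i _ u hui]; exact hRrefl _
  have hRstepy : ∀ (i : Fin t) (u : 𝒰), R u (π i (gy p q r) u) := by
    intro i u
    by_cases hui : u ∈ Ω i
    · have key : φy u = π i (gy p q r) u := by
        simp only [hφy, phiYgen, hprodΩ _ i u hui]
      rw [← key]; exact hRY u
    · rw [hfix i _ u hui]; exact hRrefl _
  -- reachability for arbitrary group elements, by closure induction
  have hRall : ∀ (g : Tri p q r) (i : Fin t) (u : 𝒰), R u (π i g u) := by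
    intro g
    have hg : g ∈ Subgroup.closure
        (Set.range (PresentedGroup.of : Fin 2 → Tri p q r)) := by
      rw [PresentedGroup.closure_range_of]; trivial
    refine Subgroup.closure_induction ?_ ?_ ?_ ?_ hg
    · rintro x ⟨n, rfl⟩ i u
      fin_cases n
      · exact hRstepx i u
      · exact hRstepy i u
    · intro i u; simpa using hRrefl u
    · intro g g' _ _ hgi hgi' i u
      have h1 : R u (π i g' u) := hgi' i u
      have h2 : R (π i g' u) (π i g (π i g' u)) := hgi i _
      have : π i (g * g') u = π i g (π i g' u) := by
        rw [map_mul]; rfl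
      rw [this]
      exact hRtrans _ _ _ h1 h2
    · intro g _ hgi i u
      have h1 : R (π i g⁻¹ u) (π i g (π i g⁻¹ u)) := hgi i _
      have h2 : π i g (π i g⁻¹ u) = u := by
        rw [← Equiv.Perm.mul_apply, ← map_mul, mul_inv_cancel, map_one, Equiv.Perm.one_apply]
      rw [h2] at h1
      exact hRsymm _ _ h1
  -- all a-points are reachable from a ⟨0⟩
  have hachain : ∀ n (hn : n < p), R (a ⟨0, hp⟩) (a ⟨n, hn⟩) := by
    intro n
    induction n with
    | zero => intro hn; exact hRrefl _
    | succ n ih =>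
      intro hn
      have hn' : n < p := Nat.lt_of_succ_lt hn
      have step : R (a ⟨n, hn'⟩) (a ⟨n + 1, hn⟩) := by
        have := hRX (a ⟨n, hn'⟩)
        rw [hφxa ⟨n, hn'⟩] at this
        have hmod : (n + 1) % p = n + 1 := Nat.mod_eq_of_lt hn
        convert this using 3
        exact hmod.symm
      exact hRtrans _ _ _ (ih hn') step
  have haR : ∀ m m' : Fin p, R (a m) (a m') := by
    intro m m'
    exact hRtrans _ _ _ (hRsymm _ _ (hachain m.val m.isLt)) (hachain m'.val m'.isLt)
  -- finish: connect z and z' through a-points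
  obtain ⟨i, hzi⟩ := hsome z
  obtain ⟨i', hzi'⟩ := hsome z'
  obtain ⟨m, rfl⟩ := hjsurj i
  obtain ⟨m', rfl⟩ := hjsurj i'
  obtain ⟨g, hg⟩ := htrans (j m) z hzi (a m) (hmem m).1
  obtain ⟨g', hg'⟩ := htrans (j m') z' hzi' (a m') (hmem m').1
  have h1 : R z (a m) := by rw [← hg]; exact hRall g (j m) z
  have h2 : R z' (a m') := by rw [← hg']; exact hRall g' (j m') z'
  exact hRtrans _ _ _ h1 (hRtrans _ _ _ (haR m m') (hRsymm _ _ h2))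
end

section
/- In the equivalent-copies construction, for every ω ∈ Ω the set B_ω is a block for the action of H = φ(Δ(p,q,r)) on 𝒰; hence, when |Ω| > 1, H acts imprimitively on 𝒰 with block system ℬ = {B_ω : ω ∈ Ω}. -/
open Equiv

/-- A permutation of `Ω` acting simultaneously on every copy `{i} × Ω`;
this models `π_1(g)π_2(g)⋯π_p(g)` on the disjoint union `𝒰 = Ω_1 ∪ ⋯ ∪ Ω_p`. -/
def prodCongrHom (ι Ω : Type) : Equiv.Perm Ω →* Equiv.Perm (ι × Ω) where
  toFun σ := Equiv.prodCongr (Equiv.refl ι) σ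
  map_one' := Equiv.ext fun z => by cases z; rfl
  map_mul' σ τ := Equiv.ext fun z => by cases z; rfl

/-- The `p`-cycle `(f_1(ω), f_2(ω), …, f_p(ω))`, where `f_i(ω) = (i, ω)`. -/
def fiberCycle (p : ℕ) (Ω : Type) [DecidableEq Ω] (ω : Ω) : Equiv.Perm (Fin p × Ω) :=
  (List.ofFn fun i : Fin p => ((i, ω) : Fin p × Ω)).formPerm

/-- `φ_x = π_1(x)⋯π_p(x) ∘ (a_1,…,a_p)(b_p,…,b_1)` on `𝒰 = Fin p × Ω`. -/
def phiX (p q r : ℕ) (Ω : Type) [DecidableEq Ω]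
    (π : Tri p q r →* Equiv.Perm Ω) (a b : Ω) : Equiv.Perm (Fin p × Ω) :=
  prodCongrHom (Fin p) Ω (π (gx p q r)) * fiberCycle p Ω a *
    ((List.ofFn fun i : Fin p => ((i, b) : Fin p × Ω)).reverse).formPerm

/-- `φ_y = π_1(y)⋯π_p(y)` on `𝒰 = Fin p × Ω`. -/
def phiY (p q r : ℕ) (Ω : Type) (π : Tri p q r →* Equiv.Perm Ω) : Equiv.Perm (Fin p × Ω) :=
  prodCongrHom (Fin p) Ω (π (gy p q r))

/-- The block `B_ω = {f_1(ω), …, f_p(ω)}` where `f_i(ω) = (i, ω)`. -/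
def Bset (p : ℕ) {Ω : Type} (ω : Ω) : Set (Fin p × Ω) :=
  Set.range fun i : Fin p => ((i, ω) : Fin p × Ω)


lemma snd_formPerm_fiber {p : ℕ} {Ω : Type} [DecidableEq Ω] {c : Ω}
    (l : List (Fin p × Ω)) (hl : ∀ z ∈ l, z.2 = c)
    (z : Fin p × Ω) : (l.formPerm z).2 = z.2 := by
  by_cases h : z ∈ l
  · rw [hl _ (l.formPerm_apply_mem_of_mem h), hl _ h]
  · rw [List.formPerm_apply_of_notMem h]

lemma mem_Bset_iff {p : ℕ} {Ω : Type} {ω : Ω} {u : Fin p × Ω} :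
    u ∈ Bset p ω ↔ u.2 = ω := by
  constructor
  · rintro ⟨i, rfl⟩; rfl
  · intro h; exact ⟨u.1, Prod.ext rfl h.symm⟩

theorem blocks_imprimitive
    (p q r k : ℕ) (hp : p.Prime) (hq : 0 < q) (hr : 0 < r) (hk : 0 < k)
    (Ω : Type) [Fintype Ω] [DecidableEq Ω]
    (π : Tri p q r →* Equiv.Perm Ω)
    (htrans : ∀ z z' : Ω, ∃ g : Tri p q r, π g z = z')
    (a b : Ω) (hab : a ≠ b)
    (hax : π (gx p q r) a = a) (hbx : π (gx p q r) b = b)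
    (hhandle : ((π (gx p q r * gy p q r)) ^ k) a = b)
    (hks : k < Nat.card {w : Ω | ∃ n : ℤ, ((π (gx p q r * gy p q r)) ^ n) a = w})
    (φ : Tri p q r →* Equiv.Perm (Fin p × Ω))
    (hφx : φ (gx p q r) = phiX p q r Ω π a b)
    (hφy : φ (gy p q r) = phiY p q r Ω π)
    :
    (∀ (ω : Ω) (g : Tri p q r),
      ⇑(φ g) '' Bset p ω = Bset p ω ∨ Disjoint (⇑(φ g) '' Bset p ω) (Bset p ω)) ∧
    (∀ u : Fin p × Ω, ∃! ω : Ω, u ∈ Bset p ω) ∧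
    (1 < Fintype.card Ω →
      ∀ ω : Ω, Bset p ω ≠ ∅ ∧ Bset p ω ≠ Set.univ) := by
  -- key lemma: the second coordinate of φ g z is π g z.2
  have snd_phiX : ∀ z : Fin p × Ω, (phiX p q r Ω π a b z).2 = π (gx p q r) z.2 := by
    intro z
    have hb : ∀ w ∈ (List.ofFn fun i : Fin p => ((i, b) : Fin p × Ω)).reverse, w.2 = b := by
      intro w hw
      rw [List.mem_reverse, List.mem_ofFn] at hw
      obtain ⟨i, rfl⟩ := hw; rfl
    have ha : ∀ w ∈ (List.ofFn fun i : Fin p => ((i, a) : Fin p × Ω)), w.2 = a := by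
      intro w hw
      rw [List.mem_ofFn] at hw
      obtain ⟨i, rfl⟩ := hw; rfl
    simp only [phiX, Equiv.Perm.mul_apply]
    have hA : ∀ w : Fin p × Ω,
        ((prodCongrHom (Fin p) Ω (π (gx p q r))) w).2 = π (gx p q r) w.2 := fun _ => rfl
    rw [hA, fiberCycle, snd_formPerm_fiber _ ha, snd_formPerm_fiber _ hb]
  have key : ∀ g : Tri p q r, ∀ z : Fin p × Ω, (φ g z).2 = π g z.2 := by
    have hS : ∀ g : Tri p q r,
        g ∈ ({g | ∀ z : Fin p × Ω, (φ g z).2 = π g z.2} : Set (Tri p q r)) := by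
      intro g
      refine PresentedGroup.generated_by _
        { carrier := {g | ∀ z : Fin p × Ω, (φ g z).2 = π g z.2}
          one_mem' := by intro z; simp
          mul_mem' := by
            intro g h hg hh z
            simp only [map_mul, Equiv.Perm.mul_apply]
            rw [hg, hh]
          inv_mem' := by
            intro g hg z
            have h1 := hg ((φ g)⁻¹ z)
            rw [Equiv.Perm.coe_inv (φ g), Equiv.apply_symm_apply] at h1
            apply Equiv.injective (π g)
            rw [map_inv, map_inv, Equiv.Perm.coe_inv (π g), Equiv.apply_symm_apply]
            exact h1.symm } ?_ g
      intro j
      fin_cases j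
      · show ∀ z : Fin p × Ω, ((φ (gx p q r)) z).2 = (π (gx p q r)) z.2
        intro z; rw [hφx]; exact snd_phiX z
      · show ∀ z : Fin p × Ω, ((φ (gy p q r)) z).2 = (π (gy p q r)) z.2
        intro z; rw [hφy]; rfl
    exact hS
  have himg : ∀ (g : Tri p q r) (ω : Ω), ⇑(φ g) '' Bset p ω = Bset p (π g ω) := by
    intro g ω
    ext u
    simp only [Set.mem_image, mem_Bset_iff]
    constructor
    · rintro ⟨z, hz, rfl⟩
      rw [key g z, hz]
    · intro hu
      refine ⟨(φ g)⁻¹ u, ?_, Equiv.apply_symm_apply _ _⟩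
      have h2 := key g⁻¹ u
      rw [map_inv, map_inv] at h2
      rw [h2, hu, Equiv.Perm.coe_inv (π g), Equiv.symm_apply_apply]
  refine ⟨?_, ?_, ?_⟩
  · intro ω g
    rw [himg]
    by_cases h : π g ω = ω
    · left; rw [h]
    · right
      rw [Set.disjoint_left]
      intro u hu hu'
      rw [mem_Bset_iff] at hu hu'
      exact h (hu ▸ hu')
  · intro u
    refine ⟨u.2, mem_Bset_iff.mpr rfl, fun ω hω => (mem_Bset_iff.mp hω).symm⟩
  · intro hcard ω
    constructor
    · intro h
      have : (⟨⟨0, hp.pos⟩, ω⟩ : Fin p × Ω) ∈ Bset p ω := mem_Bset_iff.mpr rfl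
      rw [h] at this
      exact this
    · intro h
      obtain ⟨ω', hω'⟩ := Fintype.exists_ne_of_one_lt_card hcard ω
      have : (⟨⟨0, hp.pos⟩, ω'⟩ : Fin p × Ω) ∈ Bset p ω := h ▸ Set.mem_univ _
      exact hω' (mem_Bset_iff.mp this)
end

section
/- In the equivalent-copies construction, let J ≤ H be the setwise stabiliser of B_a = {a_1,…,a_p} in H and let Q ≤ Sym(B_a) be the image of the restriction homomorphism J → Sym(B_a). Then Q is cyclic of order p, generated by the restriction of φ_x to B_a, which is the p-cycle (a_1,a_2,…,a_p). -/
open Equiv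

lemma fiber_formPerm {p : ℕ} [NeZero p] {Ω : Type} [DecidableEq Ω] (ω : Ω) (i : Fin p) :
    (List.ofFn fun j : Fin p => ((j, ω) : Fin p × Ω)).formPerm (i, ω) = (i + 1, ω) := by
  set l := List.ofFn fun j : Fin p => ((j, ω) : Fin p × Ω) with hl
  have hnd : l.Nodup := List.nodup_ofFn.mpr (fun x y hxy => by simpa using congrArg Prod.fst hxy)
  have hlen : l.length = p := by simp [hl]
  have hi : (i : ℕ) < l.length := by rw [hlen]; exact i.isLt
  have hget : l[(i : ℕ)] = (i, ω) := by simp [hl]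
  have := List.formPerm_apply_getElem l hnd i hi
  rw [hget] at this
  rw [this]
  have h2 : l[((i : ℕ) + 1) % l.length]'(Nat.mod_lt _ (Nat.zero_le _ |>.trans_lt hi))
      = (i + 1, ω) := by
    simp only [hl, List.getElem_ofFn]
    congr 1
    ext
    simp [hlen, Fin.add_def, Fin.val_one', Nat.add_mod]
  exact h2

lemma fiber_not_mem {p : ℕ} {Ω : Type} {ω ω' : Ω} (h : ω' ≠ ω) (i : Fin p) :
    ((i, ω') : Fin p × Ω) ∉ (List.ofFn fun j : Fin p => ((j, ω) : Fin p × Ω)) := by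
  simp only [List.mem_ofFn, Set.mem_range, not_exists]
  intro j hj
  exact h (congrArg Prod.snd hj).symm

open Fin.NatCast

theorem block_stabiliser_quotient_cyclic
    (p q r k : ℕ) (hp : p.Prime) (hq : 0 < q) (hr : 0 < r) (hk : 0 < k)
    (Ω : Type) [Fintype Ω] [DecidableEq Ω]
    (π : Tri p q r →* Equiv.Perm Ω)
    (htrans : ∀ z z' : Ω, ∃ g : Tri p q r, π g z = z')
    (a b : Ω) (hab : a ≠ b)
    (hax : π (gx p q r) a = a) (hbx : π (gx p q r) b = b)
    (hhandle : ((π (gx p q r * gy p q r)) ^ k) a = b)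
    (hks : k < Nat.card {w : Ω | ∃ n : ℤ, ((π (gx p q r * gy p q r)) ^ n) a = w})
    (φ : Tri p q r →* Equiv.Perm (Fin p × Ω))
    (hφx : φ (gx p q r) = phiX p q r Ω π a b)
    (hφy : φ (gy p q r) = phiY p q r Ω π)
    :
    (∀ i : Fin p, phiX p q r Ω π a b (i, a) = (finRotate p i, a)) ∧
    {σ : Equiv.Perm (Fin p) | ∃ g : Tri p q r, ∀ i : Fin p, φ g (i, a) = (σ i, a)} =
      ↑(Subgroup.zpowers (finRotate p)) ∧
    orderOf (finRotate p) = p ∧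
    Nat.card {σ : Equiv.Perm (Fin p) | ∃ g : Tri p q r, ∀ i : Fin p, φ g (i, a) = (σ i, a)}
      = p := by
  haveI : NeZero p := ⟨hp.ne_zero⟩
  haveI : Fact p.Prime := ⟨hp⟩
  obtain ⟨n, rfl⟩ : ∃ n, p = n + 1 := ⟨p - 1, (Nat.succ_pred_eq_of_pos hp.pos).symm⟩
  -- basic facts about finRotate
  have hrot : ∀ i : Fin (n+1), finRotate (n+1) i = i + 1 := fun i => finRotate_succ_apply i
  have hpow : ∀ (m : ℕ) (i : Fin (n+1)), ((finRotate (n+1)) ^ m) i = i + (m : Fin (n+1)) := by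
    intro m
    induction m with
    | zero => intro i; simp
    | succ m ih =>
      intro i
      rw [pow_succ', Equiv.Perm.mul_apply, ih, hrot, Nat.cast_add_one, add_assoc]
  -- prodCongrHom application
  have hcong : ∀ (σ : Equiv.Perm Ω) (i : Fin (n+1)) (ω : Ω),
      prodCongrHom (Fin (n+1)) Ω σ (i, ω) = (i, σ ω) := fun _ _ _ => rfl
  -- the action of phiX on the three kinds of points
  have hXa : ∀ i : Fin (n+1), phiX (n+1) q r Ω π a b (i, a) = (i + 1, a) := by
    intro i
    unfold phiX fiberCycle
    rw [Equiv.Perm.mul_apply, Equiv.Perm.mul_apply, List.formPerm_reverse]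
    rw [show ((List.ofFn fun j : Fin (n+1) => ((j, b) : Fin (n+1) × Ω)).formPerm)⁻¹ (i, a)
          = (i, a) from by
        rw [Equiv.Perm.inv_eq_iff_eq, List.formPerm_apply_of_notMem (fiber_not_mem hab i)]]
    rw [fiber_formPerm, hcong, hax]
  have hXb : ∀ i : Fin (n+1), phiX (n+1) q r Ω π a b (i, b) = (i + (-1), b) := by
    intro i
    unfold phiX fiberCycle
    rw [Equiv.Perm.mul_apply, Equiv.Perm.mul_apply, List.formPerm_reverse]
    rw [show ((List.ofFn fun j : Fin (n+1) => ((j, b) : Fin (n+1) × Ω)).formPerm)⁻¹ (i, b)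
          = (i + (-1), b) from by
        rw [Equiv.Perm.inv_eq_iff_eq, fiber_formPerm]
        congr 1
        rw [add_assoc, neg_add_cancel, add_zero]]
    rw [List.formPerm_apply_of_notMem (fiber_not_mem hab.symm _), hcong, hbx]
  have hXo : ∀ ω : Ω, ω ≠ a → ω ≠ b → ∀ i : Fin (n+1),
      phiX (n+1) q r Ω π a b (i, ω) = (i, π (gx (n+1) q r) ω) := by
    intro ω hωa hωb i
    unfold phiX fiberCycle
    rw [Equiv.Perm.mul_apply, Equiv.Perm.mul_apply]
    have hnm1 : ((i, ω) : Fin (n+1) × Ω) ∉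
        (List.ofFn fun j : Fin (n+1) => ((j, b) : Fin (n+1) × Ω)).reverse := by
      rw [List.mem_reverse]; exact fiber_not_mem hωb i
    rw [List.formPerm_apply_of_notMem hnm1,
      List.formPerm_apply_of_notMem (fiber_not_mem hωa i), hcong]
  have hY : ∀ (ω : Ω) (i : Fin (n+1)), phiY (n+1) q r Ω π (i, ω) = (i, π (gy (n+1) q r) ω) :=
    fun _ _ => rfl
  -- the "cocycle" property: every group element shifts fibers by a constant
  have key : ∀ g : Tri (n+1) q r, ∀ ω : Ω, ∃ (c : Fin (n+1)) (ω' : Ω),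
      ∀ i : Fin (n+1), φ g (i, ω) = (i + c, ω') := by
    intro g
    have hg : g ∈ Subgroup.closure (Set.range (PresentedGroup.of :
        Fin 2 → Tri (n+1) q r)) := by
      rw [PresentedGroup.closure_range_of]; trivial
    refine Subgroup.closure_induction ?_ ?_ ?_ ?_ hg
    · rintro x ⟨j, rfl⟩ ω
      fin_cases j
      · -- generator x
        show ∃ c ω', ∀ i : Fin (n+1), φ (gx (n+1) q r) (i, ω) = (i + c, ω')
        by_cases hωa : ω = a
        · subst hωa
          exact ⟨1, ω, fun i => by rw [hφx]; exact hXa i⟩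
        · by_cases hωb : ω = b
          · subst hωb
            exact ⟨-1, ω, fun i => by rw [hφx]; exact hXb i⟩
          · exact ⟨0, π (gx (n+1) q r) ω, fun i => by
              rw [hφx, hXo ω hωa hωb, add_zero]⟩
      · -- generator y
        show ∃ c ω', ∀ i : Fin (n+1), φ (gy (n+1) q r) (i, ω) = (i + c, ω')
        exact ⟨0, π (gy (n+1) q r) ω, fun i => by rw [hφy, hY, add_zero]⟩
    · intro ω; exact ⟨0, ω, fun i => by simp⟩
    · intro g h _ _ Pg Ph ω
      obtain ⟨c, ω', hc⟩ := Ph ω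
      obtain ⟨d, ω'', hd⟩ := Pg ω'
      exact ⟨c + d, ω'', fun i => by
        rw [map_mul, Equiv.Perm.mul_apply, hc, hd, add_assoc]⟩
    · intro g _ Pg ω
      set z := φ g⁻¹ (0, ω) with hz
      obtain ⟨c, ω', hc⟩ := Pg z.2
      have hgz : φ g (z.1, z.2) = (0, ω) := by
        rw [hz, map_inv]
        exact Equiv.apply_symm_apply _ _
      have h1 : (z.1 + c, ω') = (0, ω) := by rw [← hc z.1, hgz]
      have hω' : ω' = ω := congrArg Prod.snd h1
      refine ⟨-c, z.2, fun i => Equiv.injective (φ g) ?_⟩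
      rw [show φ g (φ g⁻¹ (i, ω)) = (i, ω) from by
        rw [map_inv]; exact Equiv.apply_symm_apply _ _, hc, hω']
      congr 1
      rw [add_assoc, neg_add_cancel, add_zero]
  -- Part 1
  have part1 : ∀ i : Fin (n+1), phiX (n+1) q r Ω π a b (i, a) = (finRotate (n+1) i, a) := by
    intro i; rw [hXa, hrot]
  -- the action of powers of gx on the block of a
  have hfa : ∀ i : Fin (n+1), φ (gx (n+1) q r) (i, a) = (finRotate (n+1) i, a) := by
    intro i; rw [hφx]; exact part1 i
  have hfainv : ∀ i : Fin (n+1),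
      φ (gx (n+1) q r)⁻¹ (i, a) = ((finRotate (n+1))⁻¹ i, a) := by
    intro i
    refine Equiv.injective (φ (gx (n+1) q r)) ?_
    rw [show φ (gx (n+1) q r) (φ (gx (n+1) q r)⁻¹ (i, a)) = (i, a) from by
      rw [map_inv]; exact Equiv.apply_symm_apply _ _, hfa,
      Equiv.Perm.coe_inv, Equiv.apply_symm_apply]
  have hzpow : ∀ (m : ℤ) (i : Fin (n+1)),
      φ ((gx (n+1) q r) ^ m) (i, a) = (((finRotate (n+1)) ^ m) i, a) := by
    intro m
    induction m using Int.induction_on with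
    | zero => intro i; simp
    | succ m ih =>
      intro i
      rw [zpow_add_one, map_mul, Equiv.Perm.mul_apply, hfa, ih, zpow_add_one,
        Equiv.Perm.mul_apply]
    | pred m ih =>
      intro i
      rw [zpow_sub_one, map_mul, Equiv.Perm.mul_apply, hfainv, ih, zpow_sub_one,
        Equiv.Perm.mul_apply]
  -- Part 2
  have hset : {σ : Equiv.Perm (Fin (n+1)) |
        ∃ g : Tri (n+1) q r, ∀ i : Fin (n+1), φ g (i, a) = (σ i, a)}
      = ↑(Subgroup.zpowers (finRotate (n+1))) := by
    ext σ
    simp only [Set.mem_setOf_eq, SetLike.mem_coe, Subgroup.mem_zpowers_iff]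
    constructor
    · rintro ⟨g, hg⟩
      obtain ⟨c, ω', hc⟩ := key g a
      refine ⟨(c : ℕ), ?_⟩
      ext i
      have h1 : (i + c, ω') = (σ i, a) := by rw [← hg i, hc i]
      have h2 : σ i = i + c := (congrArg Prod.fst h1).symm
      rw [zpow_natCast, hpow, Fin.cast_val_eq_self, h2]
    · rintro ⟨m, rfl⟩
      exact ⟨(gx (n+1) q r) ^ m, fun i => hzpow m i⟩
  -- Part 3
  have horder : orderOf (finRotate (n+1)) = n + 1 := by
    refine orderOf_eq_prime ?_ ?_
    · ext i
      rw [hpow]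
      simp
    · intro h
      have h0 : finRotate (n+1) 0 = 0 := by rw [h]; rfl
      rw [hrot, zero_add] at h0
      have hv := congrArg Fin.val h0
      rw [Fin.val_one', Fin.val_zero] at hv
      have h1 : 1 % (n+1) = 1 := Nat.mod_eq_of_lt hp.one_lt
      omega
  refine ⟨part1, hset, horder, ?_⟩
  rw [hset]
  simpa using (Nat.card_zpowers (finRotate (n+1))).trans horder
end

section
/- In the equivalent-copies construction, for ω ∈ Ω let τ_ω ∈ Sym(𝒰) denote the p-cycle (f_1(ω), f_2(ω), …, f_p(ω)), let V = ⟨τ_ω τ_{ω′}^{−1} : ω, ω′ ∈ Ω⟩ ≤ Sym(𝒰) and let C = {π_1(g)π_2(g)⋯π_p(g) : g ∈ Δ(p,q,r)} ≤ Sym(𝒰). Then every element of H is a product of an element of C and an element of V; moreover N ⊆ V, and consequently N is an elementary abelian p-group of order at most p^{deg−1}. -/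
open Equiv

section AuxEC

variable (p : ℕ) (Ω : Type) [DecidableEq Ω]

/-- The standard `p`-cycle on `Fin p`. -/
def cycP : Equiv.Perm (Fin p) := (List.finRange p).formPerm

/-- `prodCongrLeft` as a monoid hom. -/
def PCL : (Ω → Equiv.Perm (Fin p)) →* Equiv.Perm (Fin p × Ω) where
  toFun e := Equiv.prodCongrLeft e
  map_one' := Equiv.ext fun _ => rfl
  map_mul' _ _ := Equiv.ext fun _ => rfl

theorem PCL_apply (e : Ω → Equiv.Perm (Fin p)) (i : Fin p) (ρ : Ω) :
    PCL p Ω e (i, ρ) = (e ρ i, ρ) := rfl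

theorem fiberCycle_eq (ω : Ω) :
    fiberCycle p Ω ω = PCL p Ω (Pi.mulSingle ω (cycP p)) := by
  apply Equiv.ext
  rintro ⟨i, ρ⟩
  by_cases h : ρ = ω
  · subst h
    have hinj : Function.Injective (fun j : Fin p => ((j, ρ) : Fin p × Ω)) := by
      intro x y hxy; simpa using congrArg Prod.fst hxy
    have hi : (i : ℕ) < (List.ofFn fun j : Fin p => ((j, ρ) : Fin p × Ω)).length := by simp
    have h1 : ((i, ρ) : Fin p × Ω) = (List.ofFn fun j : Fin p => ((j, ρ) : Fin p × Ω))[(i:ℕ)] := by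
      simp
    have h2 : cycP p i = ⟨((i:ℕ)+1) % p, Nat.mod_lt _ i.pos⟩ := by
      have hi' : (i : ℕ) < (List.finRange p).length := by simp [i.2]
      have h3 : i = (List.finRange p)[(i:ℕ)] := by simp
      rw [cycP, h3, List.formPerm_apply_getElem _ (List.nodup_finRange p) _ hi']
      simp [Fin.ext_iff]
    conv_lhs => rw [fiberCycle, h1, List.formPerm_apply_getElem _ (List.nodup_ofFn.mpr hinj) _ hi]
    rw [PCL_apply, Pi.mulSingle_apply, if_pos rfl, h2]
    simp [Fin.ext_iff]
  · have hnm : ((i, ρ) : Fin p × Ω) ∉ (List.ofFn fun j : Fin p => ((j, ω) : Fin p × Ω)) := by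
      simp only [List.mem_ofFn, Set.mem_range, not_exists]
      intro j hj
      exact h (congrArg Prod.snd hj).symm
    rw [fiberCycle, List.formPerm_apply_of_notMem hnm, PCL_apply]
    simp [Pi.mulSingle_apply, h]

theorem cycP_pow : cycP p ^ p = 1 := by
  have := List.formPerm_pow_length_eq_one_of_nodup (l := List.finRange p) (List.nodup_finRange p)
  simpa [cycP] using this

/-- The cyclic subgroup generated by the standard `p`-cycle. -/
def Zc : Subgroup (Equiv.Perm (Fin p)) := Subgroup.zpowers (cycP p)

instance : IsMulCommutative (Zc p) := Subgroup.zpowers_isMulCommutative _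

open scoped IsMulCommutative

/-- Inclusion of tuples of elements of `Zc` into tuples of permutations. -/
def inclZ : (Ω → ↥(Zc p)) →* (Ω → Equiv.Perm (Fin p)) :=
  Pi.monoidHom fun ω => (Zc p).subtype.comp (Pi.evalMonoidHom _ ω)

/-- The abelian model of the group `V`. -/
def PhiEC : (Ω → ↥(Zc p)) →* Equiv.Perm (Fin p × Ω) := (PCL p Ω).comp (inclZ p Ω)

theorem PhiEC_apply (f : Ω → ↥(Zc p)) (i : Fin p) (ρ : Ω) :
    PhiEC p Ω f (i, ρ) = ((f ρ : Equiv.Perm (Fin p)) i, ρ) := rfl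

/-- The `ω`-th basis vector. -/
def deltaEC (ω : Ω) : Ω → ↥(Zc p) := Pi.mulSingle ω ⟨cycP p, Subgroup.mem_zpowers _⟩

theorem PhiEC_delta (ω : Ω) : PhiEC p Ω (deltaEC p Ω ω) = fiberCycle p Ω ω := by
  rw [fiberCycle_eq]
  refine congrArg (PCL p Ω) ?_
  funext ρ
  by_cases h : ρ = ω <;>
    simp [inclZ, deltaEC, Pi.monoidHom, Pi.evalMonoidHom, Pi.mulSingle_apply, h]

theorem pi_pow_p (hp : p.Prime) (f : Ω → ↥(Zc p)) : f ^ p = 1 := by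
  funext ω
  have h2 : ((f ω : Equiv.Perm (Fin p))) ^ p = 1 := by
    obtain ⟨n, hn⟩ := (f ω).2
    rw [← hn, ← zpow_natCast, ← zpow_mul, mul_comm, zpow_mul, zpow_natCast, cycP_pow, one_zpow]
  have h3 : (f ω) ^ p = 1 := Subtype.ext (by simpa using h2)
  simpa using h3

/-- The generators of `V`. -/
def VsetEC : Set (Equiv.Perm (Fin p × Ω)) :=
  {u | ∃ ω ω' : Ω, u = fiberCycle p Ω ω * (fiberCycle p Ω ω')⁻¹}

/-- The abelian model of `V`. -/
def DgrpEC : Subgroup (Ω → ↥(Zc p)) :=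
  Subgroup.closure {f | ∃ ω ω' : Ω, f = deltaEC p Ω ω * (deltaEC p Ω ω')⁻¹}

theorem V_le_map :
    Subgroup.closure (VsetEC p Ω) ≤ Subgroup.map (PhiEC p Ω) (DgrpEC p Ω) := by
  rw [Subgroup.closure_le]
  rintro u ⟨ω, ω', rfl⟩
  exact ⟨deltaEC p Ω ω * (deltaEC p Ω ω')⁻¹, Subgroup.subset_closure ⟨ω, ω', rfl⟩, by
    rw [map_mul, map_inv, PhiEC_delta, PhiEC_delta]⟩

theorem prodCongrHom_apply (σ : Equiv.Perm Ω) (z : Fin p × Ω) :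
    prodCongrHom (Fin p) Ω σ z = (z.1, σ z.2) := rfl

theorem conj_PCL (σ : Equiv.Perm Ω) (e : Ω → Equiv.Perm (Fin p)) :
    prodCongrHom (Fin p) Ω σ * PCL p Ω e * (prodCongrHom (Fin p) Ω σ)⁻¹
      = PCL p Ω (fun ρ => e (σ⁻¹ ρ)) := by
  have h1 : (prodCongrHom (Fin p) Ω σ)⁻¹ = prodCongrHom (Fin p) Ω σ⁻¹ := by
    rw [map_inv]
  apply Equiv.ext
  rintro ⟨i, ρ⟩
  rw [h1]
  simp only [Equiv.Perm.mul_apply, prodCongrHom_apply, PCL_apply]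
  simp

theorem conj_fiber (σ : Equiv.Perm Ω) (ω : Ω) :
    prodCongrHom (Fin p) Ω σ * fiberCycle p Ω ω * (prodCongrHom (Fin p) Ω σ)⁻¹
      = fiberCycle p Ω (σ ω) := by
  rw [fiberCycle_eq, fiberCycle_eq, conj_PCL]
  congr 1
  funext ρ
  rw [Pi.mulSingle_apply, Pi.mulSingle_apply]
  have hiff : (σ⁻¹ ρ = ω) ↔ (ρ = σ ω) := by
    constructor
    · intro h; rw [← h]; simp
    · intro h; rw [h]; simp
  simp only [hiff]

theorem conj_mem_V (σ : Equiv.Perm Ω) {v : Equiv.Perm (Fin p × Ω)}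
    (hv : v ∈ Subgroup.closure (VsetEC p Ω)) :
    prodCongrHom (Fin p) Ω σ * v * (prodCongrHom (Fin p) Ω σ)⁻¹
      ∈ Subgroup.closure (VsetEC p Ω) := by
  induction hv using Subgroup.closure_induction with
  | mem u hu =>
      obtain ⟨ω, ω', rfl⟩ := hu
      have key : prodCongrHom (Fin p) Ω σ * (fiberCycle p Ω ω * (fiberCycle p Ω ω')⁻¹) *
            (prodCongrHom (Fin p) Ω σ)⁻¹
          = (prodCongrHom (Fin p) Ω σ * fiberCycle p Ω ω * (prodCongrHom (Fin p) Ω σ)⁻¹) *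
            (prodCongrHom (Fin p) Ω σ * fiberCycle p Ω ω' * (prodCongrHom (Fin p) Ω σ)⁻¹)⁻¹ := by
        group
      rw [key, conj_fiber, conj_fiber]
      exact Subgroup.subset_closure ⟨σ ω, σ ω', rfl⟩
  | one =>
      have key : prodCongrHom (Fin p) Ω σ * 1 * (prodCongrHom (Fin p) Ω σ)⁻¹ = 1 := by group
      rw [key]; exact Subgroup.one_mem _
  | mul x y hx hy ihx ihy =>
      have key : prodCongrHom (Fin p) Ω σ * (x * y) * (prodCongrHom (Fin p) Ω σ)⁻¹
          = (prodCongrHom (Fin p) Ω σ * x * (prodCongrHom (Fin p) Ω σ)⁻¹) *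
            (prodCongrHom (Fin p) Ω σ * y * (prodCongrHom (Fin p) Ω σ)⁻¹) := by group
      rw [key]; exact Subgroup.mul_mem _ ihx ihy
  | inv x hx ihx =>
      have key : prodCongrHom (Fin p) Ω σ * x⁻¹ * (prodCongrHom (Fin p) Ω σ)⁻¹
          = (prodCongrHom (Fin p) Ω σ * x * (prodCongrHom (Fin p) Ω σ)⁻¹)⁻¹ := by group
      rw [key]; exact Subgroup.inv_mem _ ihx

/-- The sum-of-exponents homomorphism. -/
def muEC [Fintype Ω] : (Ω → ↥(Zc p)) →* ↥(Zc p) :=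
  MonoidHom.mk' (fun f => ∏ ω, f ω) fun f g => by simp [Finset.prod_mul_distrib]

theorem D_le_ker [Fintype Ω] : DgrpEC p Ω ≤ (muEC p Ω).ker := by
  rw [DgrpEC, Subgroup.closure_le]
  rintro f ⟨ω, ω', rfl⟩
  have h1 : ∀ ω'' : Ω, muEC p Ω (deltaEC p Ω ω'') = ⟨cycP p, Subgroup.mem_zpowers _⟩ := by
    intro ω''
    show (∏ j, Pi.mulSingle ω'' (⟨cycP p, Subgroup.mem_zpowers _⟩ : ↥(Zc p)) j) = _
    exact Fintype.prod_pi_mulSingle' ω'' _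
  have : muEC p Ω (deltaEC p Ω ω * (deltaEC p Ω ω')⁻¹) = 1 := by
    rw [map_mul, map_inv, h1, h1]
    simp
  exact this

end AuxEC

open scoped IsMulCommutative

theorem kernel_elementary_abelian
    (p q r k : ℕ) (hp : p.Prime) (hq : 0 < q) (hr : 0 < r) (hk : 0 < k)
    (Ω : Type) [Fintype Ω] [DecidableEq Ω]
    (π : Tri p q r →* Equiv.Perm Ω)
    (htrans : ∀ z z' : Ω, ∃ g : Tri p q r, π g z = z')
    (a b : Ω) (hab : a ≠ b)
    (hax : π (gx p q r) a = a) (hbx : π (gx p q r) b = b)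
    (hhandle : ((π (gx p q r * gy p q r)) ^ k) a = b)
    (hks : k < Nat.card {w : Ω | ∃ n : ℤ, ((π (gx p q r * gy p q r)) ^ n) a = w})
    (φ : Tri p q r →* Equiv.Perm (Fin p × Ω))
    (hφx : φ (gx p q r) = phiX p q r Ω π a b)
    (hφy : φ (gy p q r) = phiY p q r Ω π)
    :
    (∀ g : Tri p q r,
      ∃ c ∈ Set.range (fun g' : Tri p q r => prodCongrHom (Fin p) Ω (π g')),
      ∃ v ∈ Subgroup.closure
        {u : Equiv.Perm (Fin p × Ω) |
          ∃ ω ω' : Ω, u = fiberCycle p Ω ω * (fiberCycle p Ω ω')⁻¹},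
      φ g = c * v) ∧
    (∀ h : Equiv.Perm (Fin p × Ω),
      (∃ g : Tri p q r, φ g = h) → (∀ ω : Ω, ⇑h '' Bset p ω = Bset p ω) →
      h ∈ Subgroup.closure
        {u : Equiv.Perm (Fin p × Ω) |
          ∃ ω ω' : Ω, u = fiberCycle p Ω ω * (fiberCycle p Ω ω')⁻¹}) ∧
    (∀ h : Equiv.Perm (Fin p × Ω),
      (∃ g : Tri p q r, φ g = h) → (∀ ω : Ω, ⇑h '' Bset p ω = Bset p ω) → h ^ p = 1) ∧
    (∀ h h' : Equiv.Perm (Fin p × Ω),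
      (∃ g : Tri p q r, φ g = h) → (∀ ω : Ω, ⇑h '' Bset p ω = Bset p ω) →
      (∃ g : Tri p q r, φ g = h') → (∀ ω : Ω, ⇑h' '' Bset p ω = Bset p ω) →
      h * h' = h' * h) ∧
    Nat.card {h : Equiv.Perm (Fin p × Ω) |
        (∃ g : Tri p q r, φ g = h) ∧ ∀ ω : Ω, ⇑h '' Bset p ω = Bset p ω} ≤
      p ^ (Fintype.card Ω - 1) := by
  classical
  -- Part 1
  have part1 : ∀ g : Tri p q r,
      ∃ c ∈ Set.range (fun g' : Tri p q r => prodCongrHom (Fin p) Ω (π g')),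
      ∃ v ∈ Subgroup.closure (VsetEC p Ω), φ g = c * v := by
    intro g
    have hg : g ∈ Subgroup.closure (Set.range (PresentedGroup.of (rels := triRels p q r))) := by
      rw [PresentedGroup.closure_range_of]
      exact Subgroup.mem_top g
    induction hg using Subgroup.closure_induction with
    | mem x hx =>
        obtain ⟨j, rfl⟩ := hx
        fin_cases j
        · refine ⟨prodCongrHom (Fin p) Ω (π (gx p q r)), ⟨gx p q r, rfl⟩,
            fiberCycle p Ω a * (fiberCycle p Ω b)⁻¹,
            Subgroup.subset_closure ⟨a, b, rfl⟩, ?_⟩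
          show φ (gx p q r) = _
          rw [hφx, phiX, mul_assoc, List.formPerm_reverse]
          rfl
        · refine ⟨prodCongrHom (Fin p) Ω (π (gy p q r)), ⟨gy p q r, rfl⟩, 1,
            Subgroup.one_mem _, ?_⟩
          show φ (gy p q r) = _
          rw [hφy, phiY, mul_one]
    | one =>
        exact ⟨prodCongrHom (Fin p) Ω (π 1), ⟨1, rfl⟩, 1, Subgroup.one_mem _, by simp⟩
    | mul x y hx hy ihx ihy =>
        obtain ⟨c, ⟨gc, rfl⟩, v, hv, hxe⟩ := ihx
        obtain ⟨c', ⟨gc', rfl⟩, v', hv', hye⟩ := ihy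
        refine ⟨prodCongrHom (Fin p) Ω (π (gc * gc')), ⟨gc * gc', rfl⟩,
          (prodCongrHom (Fin p) Ω (π gc'⁻¹) * v * (prodCongrHom (Fin p) Ω (π gc'⁻¹))⁻¹) * v',
          Subgroup.mul_mem _ (conj_mem_V p Ω _ hv) hv', ?_⟩
        have hC : prodCongrHom (Fin p) Ω (π gc'⁻¹) = (prodCongrHom (Fin p) Ω (π gc'))⁻¹ := by
          rw [map_inv, map_inv]
        have hCC : prodCongrHom (Fin p) Ω (π (gc * gc'))
            = prodCongrHom (Fin p) Ω (π gc) * prodCongrHom (Fin p) Ω (π gc') := by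
          rw [map_mul, map_mul]
        rw [map_mul φ, hxe, hye, hC, hCC]
        group
    | inv x hx ihx =>
        obtain ⟨c, ⟨gc, rfl⟩, v, hv, hxe⟩ := ihx
        refine ⟨prodCongrHom (Fin p) Ω (π gc⁻¹), ⟨gc⁻¹, rfl⟩,
          prodCongrHom (Fin p) Ω (π gc) * v⁻¹ * (prodCongrHom (Fin p) Ω (π gc))⁻¹,
          conj_mem_V p Ω _ (Subgroup.inv_mem _ hv), ?_⟩
        have hC : prodCongrHom (Fin p) Ω (π gc⁻¹) = (prodCongrHom (Fin p) Ω (π gc))⁻¹ := by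
          rw [map_inv, map_inv]
        rw [map_inv φ, hxe, hC]
        group
  -- Part 2
  have hVsnd : ∀ w ∈ Subgroup.closure (VsetEC p Ω), ∀ z : Fin p × Ω, (w z).2 = z.2 := by
    intro w hw
    obtain ⟨f, _, rfl⟩ := V_le_map p Ω hw
    rintro ⟨i, ρ⟩
    rfl
  have part2 : ∀ h : Equiv.Perm (Fin p × Ω),
      (∃ g : Tri p q r, φ g = h) → (∀ ω : Ω, ⇑h '' Bset p ω = Bset p ω) →
      h ∈ Subgroup.closure (VsetEC p Ω) := by
    rintro h ⟨g, rfl⟩ hblocks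
    obtain ⟨c, ⟨gc, rfl⟩, v, hv, heq⟩ := part1 g
    have hsnd : ∀ z : Fin p × Ω, ((φ g) z).2 = z.2 := by
      rintro ⟨i, ρ⟩
      have hz : (φ g) (i, ρ) ∈ Bset p ρ := by
        rw [← hblocks ρ]
        exact ⟨(i, ρ), ⟨i, rfl⟩, rfl⟩
      obtain ⟨i', hi'⟩ := hz
      rw [← hi']
    have hgc : π gc = 1 := by
      apply Equiv.ext
      intro ρ
      have h0 : ((φ g) (⟨0, hp.pos⟩, ρ)).2 = ρ := hsnd _
      rw [heq] at h0
      have hv2 : (v (⟨0, hp.pos⟩, ρ)).2 = ρ := hVsnd v hv _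
      have hcv : ((prodCongrHom (Fin p) Ω (π gc) * v) (⟨0, hp.pos⟩, ρ)).2
          = π gc ((v (⟨0, hp.pos⟩, ρ)).2) := rfl
      rw [hcv, hv2] at h0
      simpa using h0
    rw [heq]
    show prodCongrHom (Fin p) Ω (π gc) * v ∈ Subgroup.closure (VsetEC p Ω)
    rw [hgc, map_one, one_mul]
    exact hv
  -- Part 3
  have part3core : ∀ h ∈ Subgroup.closure (VsetEC p Ω), h ^ p = 1 := by
    intro h hh
    obtain ⟨f, _, rfl⟩ := V_le_map p Ω hh
    rw [← map_pow, pi_pow_p p Ω hp f, map_one]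
  -- Part 4
  have part4core : ∀ h ∈ Subgroup.closure (VsetEC p Ω),
      ∀ h' ∈ Subgroup.closure (VsetEC p Ω), h * h' = h' * h := by
    intro h hh h' hh'
    obtain ⟨f, _, rfl⟩ := V_le_map p Ω hh
    obtain ⟨f', _, rfl⟩ := V_le_map p Ω hh'
    rw [← map_mul, ← map_mul, mul_comm]
  -- Part 5
  have part5 : Nat.card {h : Equiv.Perm (Fin p × Ω) |
        (∃ g : Tri p q r, φ g = h) ∧ ∀ ω : Ω, ⇑h '' Bset p ω = Bset p ω} ≤
      p ^ (Fintype.card Ω - 1) := by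
    set Nset := {h : Equiv.Perm (Fin p × Ω) |
        (∃ g : Tri p q r, φ g = h) ∧ ∀ ω : Ω, ⇑h '' Bset p ω = Bset p ω} with hNset
    have hkey : ∀ h : ↥Nset, ∃ f : Ω → ↥(Zc p),
        f ∈ DgrpEC p Ω ∧ PhiEC p Ω f = (h : Equiv.Perm (Fin p × Ω)) := by
      intro h
      obtain ⟨f, hf, hfe⟩ := V_le_map p Ω (part2 h.1 h.2.1 h.2.2)
      exact ⟨f, hf, hfe⟩
    have hJ : Function.Injective
        (fun (h : ↥Nset) (ω : {ω : Ω // ω ≠ a}) => (hkey h).choose ω.1) := by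
      intro h1 h2 hJeq
      obtain ⟨hf1, hfe1⟩ := (hkey h1).choose_spec
      obtain ⟨hf2, hfe2⟩ := (hkey h2).choose_spec
      have hoff : ∀ ω : Ω, ω ≠ a → (hkey h1).choose ω = (hkey h2).choose ω :=
        fun ω hω => congrFun hJeq ⟨ω, hω⟩
      have hp1 : (∏ ω, (hkey h1).choose ω) = 1 := D_le_ker p Ω hf1
      have hp2 : (∏ ω, (hkey h2).choose ω) = 1 := D_le_ker p Ω hf2
      have hprod : (∏ ω ∈ Finset.univ.erase a, (hkey h1).choose ω)
          = ∏ ω ∈ Finset.univ.erase a, (hkey h2).choose ω :=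
        Finset.prod_congr rfl fun ω hω => hoff ω (Finset.ne_of_mem_erase hω)
      have ha1 : (hkey h1).choose a * ∏ ω ∈ Finset.univ.erase a, (hkey h1).choose ω = 1 := by
        rw [Finset.mul_prod_erase Finset.univ _ (Finset.mem_univ a)]
        exact hp1
      have ha2 : (hkey h2).choose a * ∏ ω ∈ Finset.univ.erase a, (hkey h2).choose ω = 1 := by
        rw [Finset.mul_prod_erase Finset.univ _ (Finset.mem_univ a)]
        exact hp2
      rw [← hprod] at ha2
      have hata : (hkey h1).choose a = (hkey h2).choose a :=
        mul_right_cancel (ha1.trans ha2.symm)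
      have hfeq : (hkey h1).choose = (hkey h2).choose := by
        funext ω
        by_cases hω : ω = a
        · subst hω; exact hata
        · exact hoff ω hω
      apply Subtype.ext
      rw [← hfe1, ← hfe2, hfeq]
    calc Nat.card ↥Nset ≤ Nat.card ({ω : Ω // ω ≠ a} → ↥(Zc p)) :=
          Nat.card_le_card_of_injective _ hJ
      _ = Nat.card ↥(Zc p) ^ Nat.card {ω : Ω // ω ≠ a} := Nat.card_fun
      _ ≤ p ^ (Fintype.card Ω - 1) := by
          have hZ : Nat.card ↥(Zc p) ≤ p := by
            have h1 : Nat.card ↥(Zc p) = orderOf (cycP p) := Nat.card_zpowers (cycP p)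
            rw [h1]
            exact Nat.le_of_dvd hp.pos (orderOf_dvd_of_pow_eq_one (cycP_pow p))
          have hcard : Nat.card {ω : Ω // ω ≠ a} = Fintype.card Ω - 1 := by
            rw [Nat.card_eq_fintype_card]
            have := Fintype.card_subtype_compl (fun ω : Ω => ω = a)
            simp only [Fintype.card_subtype_eq] at this
            exact this
          rw [hcard]
          exact Nat.pow_le_pow_left hZ _
  exact ⟨part1, part2, fun h h1 h2 => part3core h (part2 h h1 h2),
    fun h h' h1 h2 h1' h2' => part4core h (part2 h h1 h2) h' (part2 h' h1' h2'),
    part5⟩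
end

section
/- In the equivalent-copies construction, H is isomorphic to a subgroup of the wreath product C_p ≀ Sym(Ω) = ((ℤ/pℤ)^Ω) ⋊ Sym(Ω), where Sym(Ω) acts on (ℤ/pℤ)^Ω by permuting coordinates: there is an injective group homomorphism θ : H → ((ℤ/pℤ)^Ω) ⋊ Sym(Ω) such that the composition of θ with the projection to Sym(Ω) has image π(Δ(p,q,r)) and kernel N, and θ(N) ⊆ (ℤ/pℤ)^Ω. In particular N is elementary abelian of order at most p^{deg}. -/
open Equiv

/-- The action of `Sym(Ω)` on `G^Ω` by permuting coordinates. -/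
def coordAct (Ω : Type) (G : Type) [Group G] :
    Equiv.Perm Ω →* MulAut (Ω → G) where
  toFun σ :=
    { toFun := fun v => v ∘ σ.symm
      invFun := fun v => v ∘ σ
      left_inv := fun v => by ext ω; simp
      right_inv := fun v => by ext ω; simp
      map_mul' := fun v w => rfl }
  map_one' := by
    apply MulEquiv.ext; intro v; rfl
  map_mul' σ τ := by
    apply MulEquiv.ext; intro v; rfl

set_option linter.unusedSectionVars false
section Auxx
variable (p : ℕ) [NeZero p] (Ω : Type) [DecidableEq Ω]

def zf (z : ZMod p) : Fin p := ⟨z.val, ZMod.val_lt z⟩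
def fz (i : Fin p) : ZMod p := (i.val : ZMod p)

lemma fz_zf (z : ZMod p) : fz p (zf p z) = z := ZMod.natCast_rightInverse z
lemma zf_fz (i : Fin p) : zf p (fz p i) = i := by
  apply Fin.ext; simp [zf, fz, ZMod.val_cast_of_lt i.isLt]

lemma fz_injective : Function.Injective (fz p) :=
  Function.LeftInverse.injective (zf_fz p)

/-- The wreath product element `(v, σ)` as a permutation of `Fin p × Ω`. -/
def wr (v : Ω → Multiplicative (ZMod p)) (σ : Equiv.Perm Ω) : Equiv.Perm (Fin p × Ω) where
  toFun z := (zf p (fz p z.1 + (v (σ z.2)).toAdd), σ z.2)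
  invFun z := (zf p (fz p z.1 - (v z.2).toAdd), σ⁻¹ z.2)
  left_inv z := by obtain ⟨i, ω⟩ := z; simp [fz_zf, zf_fz]
  right_inv z := by obtain ⟨i, ω⟩ := z; simp [fz_zf, zf_fz]

lemma wr_apply (v : Ω → Multiplicative (ZMod p)) (σ : Equiv.Perm Ω) (i : Fin p) (ω : Ω) :
    wr p Ω v σ (i, ω) = (zf p (fz p i + (v (σ ω)).toAdd), σ ω) := rfl

/-- The embedding of the wreath product into `Perm (Fin p × Ω)`. -/
def wrHom : (Ω → Multiplicative (ZMod p)) ⋊[coordAct Ω (Multiplicative (ZMod p))] Equiv.Perm Ω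
    →* Equiv.Perm (Fin p × Ω) where
  toFun g := wr p Ω g.left g.right
  map_one' := by
    apply Equiv.ext; rintro ⟨i, ω⟩
    simp [wr_apply, zf_fz]
  map_mul' g h := by
    apply Equiv.ext; rintro ⟨i, ω⟩
    simp only [wr_apply, Equiv.Perm.mul_apply, fz_zf, SemidirectProduct.mul_left,
      SemidirectProduct.mul_right, coordAct, Pi.mul_apply, MonoidHom.coe_mk, OneHom.coe_mk,
      MulEquiv.coe_mk, Equiv.coe_fn_mk, Function.comp_apply, toAdd_mul]
    have : (Equiv.symm g.right) (g.right (h.right ω)) = h.right ω := g.right.symm_apply_apply _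
    change (zf p (fz p i + Multiplicative.toAdd (g.left (g.right (h.right ω)) *
      h.left (g.right.symm (g.right (h.right ω))))), g.right (h.right ω)) = _
    rw [this]
    congr 1
    rw [toAdd_mul]
    ring

lemma wrHom_injective : Function.Injective (wrHom p Ω) := by
  intro g h hgh
  have h2 : ∀ ω : Ω, g.right ω = h.right ω := fun ω => by
    have := congrArg (fun e => (e (zf p 0, ω)).2) hgh
    simpa [wr_apply, wrHom] using this
  have hr : g.right = h.right := Equiv.ext h2
  ext ω
  · have h1 := congrArg (fun e => (e (zf p 0, g.right⁻¹ ω)).1) hgh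
    simp only [wrHom, MonoidHom.coe_mk, OneHom.coe_mk, wr_apply, Equiv.Perm.inv_def, Equiv.apply_symm_apply,
      ← hr, Equiv.apply_symm_apply] at h1
    have h3 := congrArg (fz p) h1
    simp only [fz_zf] at h3
    have h4 := add_left_cancel h3
    exact Multiplicative.toAdd.injective h4
  · rw [hr]
end Auxx
set_option linter.unusedSectionVars false
section Auxy
variable {p : ℕ} [NeZero p] {Ω : Type} [DecidableEq Ω]

lemma nodup_fiber (ω : Ω) : (List.ofFn fun i : Fin p => ((i, ω) : Fin p × Ω)).Nodup := by
  rw [List.nodup_ofFn]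
  intro i j hij
  simpa using congrArg Prod.fst hij

lemma mem_fiber_iff (ω : Ω) (z : Fin p × Ω) :
    z ∈ (List.ofFn fun i : Fin p => ((i, ω) : Fin p × Ω)) ↔ z.2 = ω := by
  simp only [List.mem_ofFn, Set.mem_range]
  constructor
  · rintro ⟨i, rfl⟩; rfl
  · rintro h; exact ⟨z.1, by rw [← h]⟩

lemma fiberCycle_apply_ne (ω ω' : Ω) (h : ω' ≠ ω) (i : Fin p) :
    fiberCycle p Ω ω (i, ω') = (i, ω') :=
  List.formPerm_apply_of_notMem (by simp [mem_fiber_iff, h])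

lemma fiberCycle_apply (ω : Ω) (i : Fin p) :
    fiberCycle p Ω ω (i, ω) = (zf p (fz p i + 1), ω) := by
  have hi : i.val < (List.ofFn fun j : Fin p => ((j, ω) : Fin p × Ω)).length := by
    simpa using i.isLt
  have hget : (List.ofFn fun j : Fin p => ((j, ω) : Fin p × Ω))[i.val] = (i, ω) := by
    simp
  have key := List.formPerm_apply_getElem _ (nodup_fiber ω) i.val hi
  rw [hget] at key
  rw [fiberCycle, key]
  rw [List.getElem_ofFn]
  refine Prod.ext ?_ rfl
  apply Fin.ext
  simp only [zf, fz, ZMod.val_add, ZMod.val_cast_of_lt i.isLt, ZMod.val_one_eq_one_mod]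
  simp [Nat.add_mod, List.length_ofFn]

lemma revFiber_apply_ne (ω ω' : Ω) (h : ω' ≠ ω) (i : Fin p) :
    ((List.ofFn fun i : Fin p => ((i, ω) : Fin p × Ω)).reverse).formPerm (i, ω') = (i, ω') :=
  List.formPerm_apply_of_notMem (by simp [mem_fiber_iff, h])

lemma val_neg_one' : (-1 : ZMod p).val = p - 1 := by
  obtain ⟨n, rfl⟩ := Nat.exists_eq_succ_of_ne_zero (NeZero.ne p)
  exact ZMod.val_neg_one n

lemma revFiber_apply (ω : Ω) (i : Fin p) :
    ((List.ofFn fun i : Fin p => ((i, ω) : Fin p × Ω)).reverse).formPerm (i, ω)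
      = (zf p (fz p i + (-1)), ω) := by
  set l := (List.ofFn fun i : Fin p => ((i, ω) : Fin p × Ω)) with hl
  have hlen : l.length = p := by simp [hl]
  have hlenr : l.reverse.length = p := by simp [hl]
  have hp0 : 0 < p := Nat.pos_of_ne_zero (NeZero.ne p)
  have hj : p - 1 - i.val < l.reverse.length := by omega
  have hget : l.reverse[p - 1 - i.val] = (i, ω) := by
    rw [List.getElem_reverse]
    simp only [hl, List.getElem_ofFn]
    refine Prod.ext ?_ rfl
    apply Fin.ext
    simp only [List.length_ofFn, Fin.val_mk, Fin.val_cast_of_lt]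
    omega
  have key := List.formPerm_apply_getElem _ (List.nodup_reverse.mpr (nodup_fiber ω))
    (p - 1 - i.val) hj
  rw [hget] at key
  rw [key, List.getElem_reverse]
  simp only [hl, List.getElem_ofFn, List.length_ofFn, List.length_reverse]
  refine Prod.ext ?_ rfl
  apply Fin.ext
  simp only [zf, Fin.val_mk, fz, Fin.val_cast_of_lt]
  rw [ZMod.val_add, ZMod.val_cast_of_lt i.isLt, val_neg_one']
  set n := i.val with hn
  have hnp : n < p := i.isLt
  rcases Nat.eq_zero_or_pos n with h0 | h1
  · rw [h0, Nat.sub_zero, Nat.sub_add_cancel hp0, Nat.mod_self,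
      Nat.zero_add, Nat.mod_eq_of_lt (by omega)]
    omega
  · have e1 : p - 1 - n + 1 = p - n := by omega
    have e2 : (p - n) % p = p - n := Nat.mod_eq_of_lt (by omega)
    have e3 : n + (p - 1) = (n - 1) + p := by omega
    rw [e1, e2, e3, Nat.add_mod_right, Nat.mod_eq_of_lt (by omega)]
    omega
end Auxy
section Auxz
variable {p : ℕ} [NeZero p] {Ω : Type} [DecidableEq Ω]

/-- The cocycle of `φ_x`. -/
def vX (a b : Ω) : Ω → Multiplicative (ZMod p) := fun ω =>
  if ω = a then Multiplicative.ofAdd 1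
  else if ω = b then Multiplicative.ofAdd (-1) else 1

lemma phiX_eq (q r : ℕ) (π : Tri p q r →* Equiv.Perm Ω) (a b : Ω) (hab : a ≠ b)
    (hax : π (gx p q r) a = a) (hbx : π (gx p q r) b = b) :
    phiX p q r Ω π a b = wr p Ω (vX a b) (π (gx p q r)) := by
  set σx := π (gx p q r) with hσ
  apply Equiv.ext; rintro ⟨i, ω⟩
  rw [phiX]
  rw [Equiv.Perm.mul_apply, Equiv.Perm.mul_apply]
  by_cases ha : ω = a
  · subst ha
    rw [revFiber_apply_ne b ω hab i, fiberCycle_apply, wr_apply]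
    simp [prodCongrHom, vX, hax]
    exact hax
  · by_cases hb : ω = b
    · subst hb
      rw [revFiber_apply, fiberCycle_apply_ne a ω (Ne.symm ?hne) _, wr_apply]
      case hne => exact fun h => ha h.symm
      simp only [prodCongrHom, MonoidHom.coe_mk, OneHom.coe_mk, Equiv.prodCongr_apply,
        Equiv.coe_refl, Prod.map_apply, id_eq, hbx]
      rw [vX, if_neg (fun h => hab h.symm), if_pos rfl]
      exact Prod.ext rfl hbx
    · rw [revFiber_apply_ne b ω hb i, fiberCycle_apply_ne a ω ha i, wr_apply]
      have hσa : σx ω ≠ a := fun h => ha (σx.injective (by rw [h, hax]))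
      have hσb : σx ω ≠ b := fun h => hb (σx.injective (by rw [h, hbx]))
      simp [prodCongrHom, vX, hσa, hσb, zf_fz]
      rfl

lemma phiY_eq (q r : ℕ) (π : Tri p q r →* Equiv.Perm Ω) :
    phiY p q r Ω π = wr p Ω 1 (π (gy p q r)) := by
  apply Equiv.ext; rintro ⟨i, ω⟩
  rw [phiY, wr_apply]
  simp [prodCongrHom, zf_fz]

lemma wr_image_Bset (v : Ω → Multiplicative (ZMod p)) (σ : Equiv.Perm Ω) (ω : Ω) :
    ⇑(wr p Ω v σ) '' Bset p ω = Bset p (σ ω) := by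
  ext z
  constructor
  · rintro ⟨w, ⟨i, rfl⟩, rfl⟩
    exact ⟨_, rfl⟩
  · rintro ⟨j, rfl⟩
    refine ⟨(zf p (fz p j - (v (σ ω)).toAdd), ω), ⟨_, rfl⟩, ?_⟩
    rw [wr_apply, fz_zf]
    simp [zf_fz]

lemma Bset_injective (ω ω' : Ω) (h : Bset p ω = Bset p ω') : ω = ω' := by
  have : (zf p 0, ω) ∈ Bset p ω' := h ▸ ⟨zf p 0, rfl⟩
  obtain ⟨i, hi⟩ := this
  exact (congrArg Prod.snd hi).symm

lemma rel_one_of_mem {α : Type*} {rels : Set (FreeGroup α)} {w : FreeGroup α} (hw : w ∈ rels) :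
    (QuotientGroup.mk w : PresentedGroup rels) = 1 :=
  (QuotientGroup.eq_one_iff _).mpr (Subgroup.subset_normalClosure hw)

lemma gx_pow (p q r : ℕ) : (gx p q r) ^ p = 1 := by
  rw [show gx p q r = (QuotientGroup.mk' (Subgroup.normalClosure (triRels p q r)))
    (FreeGroup.of 0) from rfl]
  have := rel_one_of_mem (rels := triRels p q r) (w := FreeGroup.of 0 ^ p) (Or.inl rfl)
  rw [QuotientGroup.mk_pow] at this
  exact this

lemma gy_pow (p q r : ℕ) : (gy p q r) ^ q = 1 := by
  rw [show gy p q r = (QuotientGroup.mk' (Subgroup.normalClosure (triRels p q r)))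
    (FreeGroup.of 1) from rfl]
  have := rel_one_of_mem (rels := triRels p q r) (w := FreeGroup.of 1 ^ q) (Or.inr (Or.inl rfl))
  rw [QuotientGroup.mk_pow] at this
  exact this

lemma gxy_pow (p q r : ℕ) : (gx p q r * gy p q r) ^ r = 1 := by
  rw [show gx p q r * gy p q r = (QuotientGroup.mk' (Subgroup.normalClosure (triRels p q r)))
    (FreeGroup.of 0 * FreeGroup.of 1) from rfl]
  have := rel_one_of_mem (rels := triRels p q r) (w := (FreeGroup.of 0 * FreeGroup.of 1) ^ r) (Or.inr (Or.inr rfl))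
  rw [QuotientGroup.mk_pow] at this
  exact this

lemma mult_zmod_pow (z : Multiplicative (ZMod p)) : z ^ p = 1 := by
  rw [← ofAdd_toAdd z, ← ofAdd_nsmul]
  have : p • z.toAdd = 0 := by
    rw [nsmul_eq_mul, ZMod.natCast_self, zero_mul]
  rw [this]
  rfl
end Auxz
theorem embeds_in_wreath_product
    (p q r k : ℕ) (hp : p.Prime) (hq : 0 < q) (hr : 0 < r) (hk : 0 < k)
    (Ω : Type) [Fintype Ω] [DecidableEq Ω]
    (π : Tri p q r →* Equiv.Perm Ω)
    (htrans : ∀ z z' : Ω, ∃ g : Tri p q r, π g z = z')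
    (a b : Ω) (hab : a ≠ b)
    (hax : π (gx p q r) a = a) (hbx : π (gx p q r) b = b)
    (hhandle : ((π (gx p q r * gy p q r)) ^ k) a = b)
    (hks : k < Nat.card {w : Ω | ∃ n : ℤ, ((π (gx p q r * gy p q r)) ^ n) a = w})
    (φ : Tri p q r →* Equiv.Perm (Fin p × Ω))
    (hφx : φ (gx p q r) = phiX p q r Ω π a b)
    (hφy : φ (gy p q r) = phiY p q r Ω π)
    :
    ∃ θ : φ.range →*
        (Ω → Multiplicative (ZMod p)) ⋊[coordAct Ω (Multiplicative (ZMod p))] Equiv.Perm Ω,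
      Function.Injective θ ∧
      (SemidirectProduct.rightHom.comp θ).range = π.range ∧
      (∀ h : φ.range,
        SemidirectProduct.rightHom (θ h) = 1 ↔
          ∀ ω : Ω, ⇑(h : Equiv.Perm (Fin p × Ω)) '' Bset p ω = Bset p ω) ∧
      (∀ h : φ.range,
        (∀ ω : Ω, ⇑(h : Equiv.Perm (Fin p × Ω)) '' Bset p ω = Bset p ω) → h ^ p = 1) ∧
      Nat.card {h : φ.range |
          ∀ ω : Ω, ⇑(h : Equiv.Perm (Fin p × Ω)) '' Bset p ω = Bset p ω} ≤
        p ^ Fintype.card Ω := by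
  classical
  haveI : NeZero p := ⟨hp.ne_zero⟩
  -- abbreviations
  set σx := π (gx p q r) with hσx
  set σy := π (gy p q r) with hσy
  -- the two wreath-product elements mapping to φ(gx), φ(gy)
  set X : (Ω → Multiplicative (ZMod p)) ⋊[coordAct Ω (Multiplicative (ZMod p))] Equiv.Perm Ω :=
    ⟨vX a b, σx⟩ with hX
  set Y : (Ω → Multiplicative (ZMod p)) ⋊[coordAct Ω (Multiplicative (ZMod p))] Equiv.Perm Ω :=
    ⟨1, σy⟩ with hY
  have hwX : wrHom p Ω X = φ (gx p q r) := by
    rw [hφx, phiX_eq q r π a b hab hax hbx]; rfl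
  have hwY : wrHom p Ω Y = φ (gy p q r) := by
    rw [hφy, phiY_eq q r π]; rfl
  have hXp : X ^ p = 1 := by
    apply wrHom_injective p Ω
    rw [map_pow, hwX, map_one, ← map_pow, gx_pow, map_one]
  have hYq : Y ^ q = 1 := by
    apply wrHom_injective p Ω
    rw [map_pow, hwY, map_one, ← map_pow, gy_pow, map_one]
  have hXYr : (X * Y) ^ r = 1 := by
    apply wrHom_injective p Ω
    rw [map_pow, map_mul, hwX, hwY, map_one, ← map_mul, ← map_pow, gxy_pow, map_one]
  -- the lift ψ : Tri p q r →* SDP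
  set f : Fin 2 → (Ω → Multiplicative (ZMod p)) ⋊[coordAct Ω (Multiplicative (ZMod p))]
      Equiv.Perm Ω := ![X, Y] with hf
  have hrels : ∀ rel ∈ triRels p q r, FreeGroup.lift f rel = 1 := by
    intro rel hrel
    rcases hrel with h1 | h2 | h3
    · rw [h1, map_pow, FreeGroup.lift_apply_of]; exact hXp
    · rw [h2, map_pow, FreeGroup.lift_apply_of]; exact hYq
    · rw [h3, map_pow, map_mul, FreeGroup.lift_apply_of, FreeGroup.lift_apply_of]; exact hXYr
  set ψ : Tri p q r →* _ := PresentedGroup.toGroup hrels with hψ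
  have hψx : ψ (gx p q r) = X := PresentedGroup.toGroup.of hrels
  have hψy : ψ (gy p q r) = Y := PresentedGroup.toGroup.of hrels
  have hcomm : ∀ g : Tri p q r, wrHom p Ω (ψ g) = φ g := by
    have : (wrHom p Ω).comp ψ = φ := by
      apply PresentedGroup.ext
      intro x
      fin_cases x
      · show wrHom p Ω (ψ (gx p q r)) = φ (gx p q r)
        rw [hψx, hwX]
      · show wrHom p Ω (ψ (gy p q r)) = φ (gy p q r)
        rw [hψy, hwY]
    exact fun g => DFunLike.congr_fun this g
  have hrψ : ∀ g : Tri p q r, SemidirectProduct.rightHom (ψ g) = π g := by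
    have : SemidirectProduct.rightHom.comp ψ = π := by
      apply PresentedGroup.ext
      intro x
      fin_cases x
      · show SemidirectProduct.rightHom (ψ (gx p q r)) = π (gx p q r)
        rw [hψx]; rfl
      · show SemidirectProduct.rightHom (ψ (gy p q r)) = π (gy p q r)
        rw [hψy]; rfl
    exact fun g => DFunLike.congr_fun this g
  -- define θ using choice
  have hmem : ∀ h : φ.range, ∃ g : Tri p q r, φ g = (h : Equiv.Perm (Fin p × Ω)) :=
    fun h => MonoidHom.mem_range.mp h.2
  set t : φ.range → (Ω → Multiplicative (ZMod p)) ⋊[coordAct Ω (Multiplicative (ZMod p))]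
      Equiv.Perm Ω := fun h => ψ (hmem h).choose with ht
  have hspec : ∀ h : φ.range, wrHom p Ω (t h) = (h : Equiv.Perm (Fin p × Ω)) := fun h => by
    rw [ht, hcomm]; exact (hmem h).choose_spec
  have htpsi : ∀ g : Tri p q r, t ⟨φ g, ⟨g, rfl⟩⟩ = ψ g := by
    intro g
    apply wrHom_injective p Ω
    rw [hspec, hcomm]
  set θ : φ.range →* (Ω → Multiplicative (ZMod p)) ⋊[coordAct Ω (Multiplicative (ZMod p))]
      Equiv.Perm Ω := MonoidHom.mk' t (by
    intro h1 h2
    apply wrHom_injective p Ω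
    rw [map_mul, hspec, hspec, hspec]
    rfl) with hθ
  have hθspec : ∀ h : φ.range, wrHom p Ω (θ h) = (h : Equiv.Perm (Fin p × Ω)) := hspec
  have hθinj : Function.Injective θ := by
    intro h h' he
    apply Subtype.ext
    rw [← hθspec h, ← hθspec h', he]
  -- the key image formula
  have himg : ∀ (h : φ.range) (ω : Ω),
      ⇑(h : Equiv.Perm (Fin p × Ω)) '' Bset p ω = Bset p ((θ h).right ω) := by
    intro h ω
    rw [← hθspec h]
    exact wr_image_Bset (θ h).left (θ h).right ω
  refine ⟨θ, hθinj, ?_, ?_, ?_, ?_⟩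
  · -- range equality
    ext σ
    simp only [MonoidHom.mem_range, MonoidHom.comp_apply]
    constructor
    · rintro ⟨h, rfl⟩
      obtain ⟨g, hg⟩ := hmem h
      have : θ h = ψ g := by
        apply wrHom_injective p Ω
        rw [hθspec, hcomm, hg]
      exact ⟨g, by rw [this, hrψ]⟩
    · rintro ⟨g, rfl⟩
      refine ⟨⟨φ g, ⟨g, rfl⟩⟩, ?_⟩
      have : θ ⟨φ g, ⟨g, rfl⟩⟩ = ψ g := htpsi g
      rw [this, hrψ]
  · -- block characterization
    intro h
    have hrh : SemidirectProduct.rightHom (θ h) = (θ h).right := rfl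
    constructor
    · intro h1 ω
      rw [himg h ω, hrh] at *
      rw [h1]
      simp
    · intro hblocks
      rw [hrh]
      apply Equiv.ext
      intro ω
      have := hblocks ω
      rw [himg h ω] at this
      exact Bset_injective _ _ this
  · -- h^p = 1
    intro h hblocks
    have hr1 : (θ h).right = 1 := by
      apply Equiv.ext
      intro ω
      have := hblocks ω
      rw [himg h ω] at this
      exact Bset_injective _ _ this
    have hinl : θ h = SemidirectProduct.inl (θ h).left := by
      conv_lhs => rw [← SemidirectProduct.inl_left_mul_inr_right (θ h)]
      rw [hr1, map_one, mul_one]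
    have hlp : (θ h).left ^ p = 1 := by
      funext ω
      exact mult_zmod_pow _
    have hθhp : (θ h) ^ p = 1 := by
      rw [hinl, ← map_pow, hlp, map_one]
    apply Subtype.ext
    have : ((h ^ p : φ.range) : Equiv.Perm (Fin p × Ω))
        = ((h : φ.range) : Equiv.Perm (Fin p × Ω)) ^ p := rfl
    rw [this, ← hθspec h, ← map_pow, hθhp, map_one]
    rfl
  · -- cardinality bound
    set S := {h : φ.range |
      ∀ ω : Ω, ⇑(h : Equiv.Perm (Fin p × Ω)) '' Bset p ω = Bset p ω} with hS
    have hright1 : ∀ h : S, ((θ h.1).right : Equiv.Perm Ω) = 1 := by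
      intro h
      apply Equiv.ext
      intro ω
      have := h.2 ω
      rw [himg h.1 ω] at this
      exact Bset_injective _ _ this
    have hFinj : Function.Injective (fun h : S => (θ h.1).left) := by
      intro h h' he
      apply Subtype.ext
      apply hθinj
      have e1 : θ h.1 = SemidirectProduct.inl (θ h.1).left := by
        conv_lhs => rw [← SemidirectProduct.inl_left_mul_inr_right (θ h.1)]
        rw [hright1 h, map_one, mul_one]
      have e2 : θ h'.1 = SemidirectProduct.inl (θ h'.1).left := by
        conv_lhs => rw [← SemidirectProduct.inl_left_mul_inr_right (θ h'.1)]
        rw [hright1 h', map_one, mul_one]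
      have he' : (θ h.1).left = (θ h'.1).left := he
      rw [e1, e2, he']
    calc Nat.card S ≤ Nat.card (Ω → Multiplicative (ZMod p)) :=
        Nat.card_le_card_of_injective _ hFinj
    _ = Nat.card (Multiplicative (ZMod p)) ^ Nat.card Ω := Nat.card_fun
    _ = p ^ Fintype.card Ω := by
        rw [Nat.card_eq_fintype_card (α := Ω)]
        congr 1
        rw [Nat.card_congr (Multiplicative.toAdd (α := ZMod p)), Nat.card_zmod]
end

section
/- In the commuting-permutations construction, for every ω ∈ Ω and every g ∈ Δ(p,q,r) we have B_ω^{φ(g)} = B_{ω^{π(g)}} = B_ω^{π(g)} (sets acted on pointwise). Consequently, the sets B_ω (ω ∈ Ω) are blocks for the action of the subgroup ⟨φ_x, φ_y⟩ on Ω if and only if they are blocks for the action of π(Δ(p,q,r)) on Ω. -/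
open Equiv

/-- `φ_x = π(x) ∘ (a_1,…,a_p)(b_p,…,b_1)` where `a_i = h_i(a)`, `b_i = h_i(b)`. -/
def phiXcomm (p q r : ℕ) (Ω : Type) [DecidableEq Ω]
    (π : Tri p q r →* Equiv.Perm Ω) (h : Fin p → Equiv.Perm Ω) (a b : Ω) : Equiv.Perm Ω :=
  π (gx p q r) * (List.ofFn fun i : Fin p => h i a).formPerm *
    ((List.ofFn fun i : Fin p => h i b).reverse).formPerm

/-- A `formPerm` maps the set of elements of its list onto itself. -/
lemma formPerm_image_self {Ω : Type} [DecidableEq Ω] (l : List Ω) :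
    ⇑l.formPerm '' {x | x ∈ l} = {x | x ∈ l} := by
  ext x
  simp only [Set.mem_image, Set.mem_setOf_eq]
  constructor
  · rintro ⟨y, hy, rfl⟩
    exact List.formPerm_apply_mem_of_mem hy
  · intro hx
    refine ⟨l.formPerm⁻¹ x, ?_, by simp⟩
    have : l.formPerm (l.formPerm⁻¹ x) ∈ l := by simpa using hx
    exact List.mem_of_formPerm_apply_mem this

lemma image_formPerm_of_cases {Ω : Type} [DecidableEq Ω] (l : List Ω)
    (S : Set Ω) (hcase : S = {x | x ∈ l} ∨ ∀ x ∈ S, x ∉ l) :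
    ⇑l.formPerm '' S = S := by
  rcases hcase with rfl | hfix
  · exact formPerm_image_self l
  · have : ∀ x ∈ S, l.formPerm x = id x := fun x hx =>
      List.formPerm_apply_of_notMem (hfix x hx)
    rw [Set.image_congr this, Set.image_id]

theorem commuting_perms_blocks_iff
    (p q r k : ℕ) (hp : 0 < p) (hq : 0 < q) (hr : 0 < r) (hk : 0 < k)
    (Ω : Type) [Fintype Ω] [DecidableEq Ω]
    (π : Tri p q r →* Equiv.Perm Ω)
    (htrans : ∀ z z' : Ω, ∃ g : Tri p q r, π g z = z')
    (h : Fin p → Equiv.Perm Ω)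
    (h0 : h ⟨0, hp⟩ = 1)
    (hsub : ∃ S : Subgroup (Equiv.Perm Ω), (S : Set (Equiv.Perm Ω)) = Set.range h)
    (hcomm : ∀ (i : Fin p) (g : Tri p q r), Commute (h i) (π g))
    (a b : Ω)
    (hax : π (gx p q r) a = a) (hbx : π (gx p q r) b = b)
    (hhandle : ((π (gx p q r * gy p q r)) ^ k) a = b)
    (hks : k < Nat.card {w : Ω | ∃ n : ℤ, ((π (gx p q r * gy p q r)) ^ n) a = w})
    (hdistinct : Function.Injective (Sum.elim (fun i : Fin p => h i a) (fun i : Fin p => h i b)))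
    (horb_a : ∀ (i i' : Fin p) (n : ℤ),
      ((π (gx p q r * gy p q r)) ^ n) (h i a) = h i' a → i' = i)
    (horb_b : ∀ (i i' : Fin p) (n : ℤ),
      ((π (gx p q r * gy p q r)) ^ n) (h i a) = h i' b → i' = i)
    (φ : Tri p q r →* Equiv.Perm Ω)
    (hφx : φ (gx p q r) = phiXcomm p q r Ω π h a b)
    (hφy : φ (gy p q r) = π (gy p q r)) :
    (∀ (ω : Ω) (g : Tri p q r),
      ⇑(φ g) '' (Set.range fun i : Fin p => h i ω) =
        (Set.range fun i : Fin p => h i (π g ω)) ∧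
      ⇑(π g) '' (Set.range fun i : Fin p => h i ω) =
        (Set.range fun i : Fin p => h i (π g ω))) ∧
    ((∀ ω : Ω, ∀ f ∈ Subgroup.closure {phiXcomm p q r Ω π h a b, π (gy p q r)},
        ⇑f '' (Set.range fun i : Fin p => h i ω) = (Set.range fun i : Fin p => h i ω) ∨
        Disjoint (⇑f '' (Set.range fun i : Fin p => h i ω))
          (Set.range fun i : Fin p => h i ω)) ↔
      (∀ (ω : Ω) (g : Tri p q r),
        ⇑(π g) '' (Set.range fun i : Fin p => h i ω) = (Set.range fun i : Fin p => h i ω) ∨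
        Disjoint (⇑(π g) '' (Set.range fun i : Fin p => h i ω))
          (Set.range fun i : Fin p => h i ω))) := by
  obtain ⟨S, hS⟩ := hsub
  set B : Ω → Set Ω := fun ω => Set.range fun i : Fin p => h i ω with hB
  -- commuting
  have hkey : ∀ (i : Fin p) (g : Tri p q r) (ω : Ω), π g (h i ω) = h i (π g ω) := by
    intro i g ω
    rw [← Equiv.Perm.mul_apply, ← (hcomm i g).eq, Equiv.Perm.mul_apply]
  -- π part
  have hπ : ∀ (g : Tri p q r) (ω : Ω), ⇑(π g) '' B ω = B (π g ω) := by
    intro g ω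
    ext x
    simp only [hB, Set.mem_image, Set.mem_range]
    constructor
    · rintro ⟨y, ⟨i, rfl⟩, rfl⟩
      exact ⟨i, (hkey i g ω).symm⟩
    · rintro ⟨i, rfl⟩
      exact ⟨h i ω, ⟨i, rfl⟩, hkey i g ω⟩
  -- membership in S
  have hmemS : ∀ i : Fin p, h i ∈ S := by
    intro i
    have : h i ∈ (S : Set (Equiv.Perm Ω)) := by rw [hS]; exact ⟨i, rfl⟩
    exact this
  -- orbit lemma: one-sided
  have horb_sub : ∀ (i j : Fin p) (ω ν : Ω), h i ω = h j ν → B ω ⊆ B ν := by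
    intro i j ω ν he
    rintro x ⟨i', rfl⟩
    have hg : h i' * (h i)⁻¹ * h j ∈ (S : Set (Equiv.Perm Ω)) :=
      S.mul_mem (S.mul_mem (hmemS i') (S.inv_mem (hmemS i))) (hmemS j)
    rw [hS] at hg
    obtain ⟨m, hm⟩ := hg
    refine ⟨m, ?_⟩
    show h m ν = h i' ω
    rw [hm]
    simp only [Equiv.Perm.mul_apply]
    rw [← he]; simp
  have horbeq : ∀ (i j : Fin p) (ω ν : Ω), h i ω = h j ν → B ω = B ν := by
    intro i j ω ν he
    exact Set.Subset.antisymm (horb_sub i j ω ν he) (horb_sub j i ν ω he.symm)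
  -- lists
  set La : List Ω := List.ofFn fun i : Fin p => h i a with hLa
  set Lb : List Ω := List.ofFn fun i : Fin p => h i b with hLb
  have hmemLa : ∀ x, x ∈ La ↔ x ∈ B a := by
    intro x; rw [hLa]; exact List.mem_ofFn
  have hmemLb : ∀ x, x ∈ Lb.reverse ↔ x ∈ B b := by
    intro x; rw [List.mem_reverse, hLb]; exact List.mem_ofFn
  have hab : ∀ i j : Fin p, h i a ≠ h j b := by
    intro i j he
    have : (Sum.inl i : Fin p ⊕ Fin p) = Sum.inr j := hdistinct he
    simp at this
  -- formPerm images
  have hfixA : ∀ ω : Ω, ⇑La.formPerm '' B ω = B ω := by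
    intro ω
    refine image_formPerm_of_cases La (B ω) ?_
    by_cases hc : ∃ i j : Fin p, h i ω = h j a
    · obtain ⟨i, j, he⟩ := hc
      left
      rw [horbeq i j ω a he]
      ext x; rw [Set.mem_setOf_eq, hmemLa]
    · right
      rintro x ⟨i, rfl⟩ hxl
      rw [hmemLa] at hxl
      obtain ⟨j, hj⟩ := hxl
      exact hc ⟨i, j, hj.symm⟩
  have hfixB : ∀ ω : Ω, ⇑Lb.reverse.formPerm '' B ω = B ω := by
    intro ω
    refine image_formPerm_of_cases Lb.reverse (B ω) ?_
    by_cases hc : ∃ i j : Fin p, h i ω = h j b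
    · obtain ⟨i, j, he⟩ := hc
      left
      rw [horbeq i j ω b he]
      ext x; rw [Set.mem_setOf_eq, hmemLb]
    · right
      rintro x ⟨i, rfl⟩ hxl
      rw [hmemLb] at hxl
      obtain ⟨j, hj⟩ := hxl
      exact hc ⟨i, j, hj.symm⟩
  -- φ on gx
  have hφgx : ∀ ω : Ω, ⇑(phiXcomm p q r Ω π h a b) '' B ω = B (π (gx p q r) ω) := by
    intro ω
    have : ⇑(phiXcomm p q r Ω π h a b) =
        ⇑(π (gx p q r)) ∘ ⇑La.formPerm ∘ ⇑Lb.reverse.formPerm := by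
      rw [phiXcomm]
      ext z
      simp [Equiv.Perm.mul_apply, hLa, hLb]
    rw [this, Set.image_comp, Set.image_comp, hfixB, hfixA, hπ]
  -- φ part, by induction over the group
  have hmain : ∀ (g : Tri p q r) (ω : Ω), ⇑(φ g) '' B ω = B (π g ω) := by
    intro g
    have hg : g ∈ Subgroup.closure (Set.range (PresentedGroup.of :
        Fin 2 → Tri p q r)) := by
      rw [PresentedGroup.closure_range_of]; trivial
    refine Subgroup.closure_induction
      (p := fun g _ => ∀ ω : Ω, ⇑(φ g) '' B ω = B (π g ω)) ?_ ?_ ?_ ?_ hg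
    · rintro x ⟨i, rfl⟩ ω
      fin_cases i
      · show ⇑(φ (gx p q r)) '' B ω = B (π (gx p q r) ω)
        rw [hφx]
        exact hφgx ω
      · show ⇑(φ (gy p q r)) '' B ω = B (π (gy p q r) ω)
        rw [hφy]
        exact hπ _ ω
    · intro ω; simp
    · intro g₁ g₂ _ _ h1 h2 ω
      rw [map_mul, map_mul, Equiv.Perm.coe_mul, Equiv.Perm.coe_mul, Set.image_comp,
        h2 ω, h1 (π g₂ ω), Function.comp_apply]
    · intro g _ hgω ω
      have h1 := hgω (π g⁻¹ ω)
      have h2 : (π g) ((π g⁻¹) ω) = ω := by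
        rw [map_inv]; simp
      rw [h2] at h1
      rw [← h1, ← Set.image_comp]
      have h3 : ⇑(φ g⁻¹) ∘ ⇑(φ g) = id := by
        ext z; simp [map_inv]
      rw [h3, Set.image_id]
  -- closure correspondence
  have hcl1 : ∀ g : Tri p q r,
      φ g ∈ Subgroup.closure {phiXcomm p q r Ω π h a b, π (gy p q r)} := by
    intro g
    have hg : g ∈ Subgroup.closure (Set.range (PresentedGroup.of :
        Fin 2 → Tri p q r)) := by
      rw [PresentedGroup.closure_range_of]; trivial
    refine Subgroup.closure_induction
      (p := fun g _ => φ g ∈ Subgroup.closure {phiXcomm p q r Ω π h a b, π (gy p q r)})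
      ?_ ?_ ?_ ?_ hg
    · rintro x ⟨i, rfl⟩
      fin_cases i
      · show φ (gx p q r) ∈ _
        rw [hφx]
        exact Subgroup.subset_closure (Set.mem_insert _ _)
      · show φ (gy p q r) ∈ _
        rw [hφy]
        exact Subgroup.subset_closure (Set.mem_insert_of_mem _ rfl)
    · show φ (1 : Tri p q r) ∈ _
      rw [map_one]; exact one_mem _
    · intro g₁ g₂ _ _ h1 h2; rw [map_mul]; exact mul_mem h1 h2
    · intro g _ h1; rw [map_inv]; exact inv_mem h1
  have hcl2 : ∀ f ∈ Subgroup.closure {phiXcomm p q r Ω π h a b, π (gy p q r)},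
      ∃ g : Tri p q r, φ g = f := by
    intro f hf
    refine Subgroup.closure_induction
      (p := fun f _ => ∃ g : Tri p q r, φ g = f) ?_ ?_ ?_ ?_ hf
    · rintro x (rfl | rfl)
      · exact ⟨gx p q r, hφx⟩
      · exact ⟨gy p q r, hφy⟩
    · exact ⟨1, map_one φ⟩
    · rintro x y _ _ ⟨g₁, rfl⟩ ⟨g₂, rfl⟩
      exact ⟨g₁ * g₂, map_mul φ g₁ g₂⟩
    · rintro x _ ⟨g, rfl⟩
      exact ⟨g⁻¹, map_inv φ g⟩
  refine ⟨fun ω g => ⟨hmain g ω, hπ g ω⟩, ?_, ?_⟩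
  · intro hblk ω g
    rw [hπ g ω, ← hmain g ω]
    exact hblk ω (φ g) (hcl1 g)
  · intro hblk ω f hf
    obtain ⟨g, rfl⟩ := hcl2 f hf
    rw [hmain g ω, ← hπ g ω]
    exact hblk ω g
end
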